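/- arXiv:2501.11530 — 5 statements merged into one kernel-verified Lean document; each statement's English description precedes it below -/
import Mathlib

section
/- For all positive integers m and n there exist constants C > 0 and κ > 0 with the following property: for every real number T ≥ 1, every m×n matrix A with integer entries all of absolute value at most T, and every vector v ∈ ℝⁿ, there exists a vector w ∈ ℝⁿ such that A·w = 0 (viewing A as a real matrix) and ‖v − w‖ ≤ C · T^κ · ‖A·v‖, where ‖·‖ denotes the Euclidean norms on ℝⁿ and ℝᵐ. -/
open Polynomial in
lemma prod_coeff_bound {ι : Type*} (s : Finset ι) (f : ι → Polynomial ℝ) (B : ℝ) (hB : 1 ≤ B)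
    (hdeg : ∀ i ∈ s, (f i).natDegree ≤ 1) (hcoef : ∀ i ∈ s, ∀ j, |(f i).coeff j| ≤ B) :
    ∀ j, |(∏ i ∈ s, f i).coeff j| ≤ (2*B) ^ s.card := by
  classical
  induction s using Finset.cons_induction with
  | empty => intro j; rcases j with _|j <;> simp [Polynomial.coeff_one]
  | cons a s ha ih =>
    intro j
    rw [Finset.prod_cons, Finset.card_cons]
    set P := ∏ i ∈ s, f i with hP
    have hfa := Polynomial.eq_X_add_C_of_natDegree_le_one (hdeg a (Finset.mem_cons_self a s))
    have ihP : ∀ j, |P.coeff j| ≤ (2*B) ^ s.card :=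
      ih (fun i hi => hdeg i (Finset.mem_cons_of_mem hi)) (fun i hi => hcoef i (Finset.mem_cons_of_mem hi))
    have hc0 : |(f a).coeff 0| ≤ B := hcoef a (Finset.mem_cons_self a s) 0
    have hc1 : |(f a).coeff 1| ≤ B := hcoef a (Finset.mem_cons_self a s) 1
    have key : (f a * P).coeff j = (f a).coeff 1 * (X * P).coeff j + (f a).coeff 0 * P.coeff j := by
      conv_lhs => rw [hfa]
      rw [add_mul, coeff_add, mul_assoc, coeff_C_mul, coeff_C_mul]
    have hXP : |(X * P).coeff j| ≤ (2*B) ^ s.card := by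
      rcases j with _|j
      · simp [Polynomial.mul_coeff_zero]
        positivity
      · rw [Polynomial.coeff_X_mul]; exact ihP j
    calc |(f a * P).coeff j| ≤ |(f a).coeff 1| * |(X * P).coeff j| + |(f a).coeff 0| * |P.coeff j| := by
          rw [key]; exact (abs_add_le _ _).trans (by rw [abs_mul, abs_mul])
      _ ≤ B * (2*B) ^ s.card + B * (2*B) ^ s.card := by
          gcongr <;> first | exact hc1 | exact hXP | exact hc0 | exact ihP j | positivity
      _ = (2*B) ^ (s.card + 1) := by ring

open Polynomial in
lemma charpoly_coeff_bound {N : ℕ} (M : Matrix (Fin N) (Fin N) ℝ) (B : ℝ) (hB : 1 ≤ B)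
    (h : ∀ i j, |M i j| ≤ B) (j : ℕ) :
    |M.charpoly.coeff j| ≤ (N.factorial : ℝ) * (2*B) ^ N := by
  classical
  rw [Matrix.charpoly, Matrix.det_apply, Polynomial.finset_sum_coeff]
  have hterm : ∀ σ : Equiv.Perm (Fin N),
      |(Equiv.Perm.sign σ • ∏ i, Matrix.charmatrix M (σ i) i).coeff j| ≤ (2*B)^N := by
    intro σ
    have : (Equiv.Perm.sign σ • ∏ i, Matrix.charmatrix M (σ i) i).coeff j
        = (Equiv.Perm.sign σ : ℤ) • (∏ i, Matrix.charmatrix M (σ i) i).coeff j := by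
      rw [Units.smul_def, Polynomial.coeff_smul]
    rw [this, zsmul_eq_mul, abs_mul]
    have hs : |((Equiv.Perm.sign σ : ℤ) : ℝ)| = 1 := by
      rcases Int.units_eq_one_or (Equiv.Perm.sign σ) with h1 | h1 <;> rw [h1] <;> norm_num
    rw [hs, one_mul]
    have := prod_coeff_bound Finset.univ (fun i => Matrix.charmatrix M (σ i) i) B hB
      (fun i _ => by
        show (Matrix.charmatrix M (σ i) i).natDegree ≤ 1
        rcases eq_or_ne (σ i) i with he | he
        · rw [he, Matrix.charmatrix_apply_eq]
          exact (Polynomial.natDegree_X_sub_C _).le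
        · rw [Matrix.charmatrix_apply_ne _ _ _ he, natDegree_neg, natDegree_C]; omega)
      (fun i _ k => by
        show |(Matrix.charmatrix M (σ i) i).coeff k| ≤ B
        rcases eq_or_ne (σ i) i with he | he
        · rw [he, Matrix.charmatrix_apply_eq]
          rcases k with _|_|k
          · simpa [coeff_sub] using h i i
          · simpa [coeff_sub] using hB
          · simp [coeff_sub, coeff_X]; positivity
        · rw [Matrix.charmatrix_apply_ne _ _ _ he]
          rcases k with _|k
          · simpa using h (σ i) i
          · simp [coeff_C]; positivity) j
    simpa using this
  calc |∑ σ : Equiv.Perm (Fin N), (Equiv.Perm.sign σ • ∏ i, Matrix.charmatrix M (σ i) i).coeff j|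
      ≤ ∑ σ : Equiv.Perm (Fin N), (2*B)^N :=
        (Finset.abs_sum_le_sum_abs _ _).trans (Finset.sum_le_sum fun σ _ => hterm σ)
    _ = (N.factorial : ℝ) * (2*B)^N := by
        rw [Finset.sum_const, Finset.card_univ, Fintype.card_perm, Fintype.card_fin, nsmul_eq_mul]


lemma euclidean_norm_bound {a b : ℕ} (ha : 0 < a) (hb : 0 < b)
    (N : Matrix (Fin a) (Fin b) ℝ) (c : ℝ) (hc : 0 ≤ c) (h : ∀ i j, |N i j| ≤ c)
    (x : EuclideanSpace ℝ (Fin b)) :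
    ‖Matrix.toEuclideanLin N x‖ ≤ (a : ℝ) * b * c * ‖x‖ := by
  have hy : ∀ i, (Matrix.toEuclideanLin N x) i = ∑ j, N i j * x j := by
    intro i
    rw [Matrix.toEuclideanLin_apply]
    rfl
  have hnx : ‖x‖ = Real.sqrt (∑ j, (x j)^2) := by
    simp [EuclideanSpace.norm_eq, Real.norm_eq_abs, sq_abs]
  have hrow : ∀ i : Fin a, ((Matrix.toEuclideanLin N x) i)^2 ≤ (b*c^2) * (∑ j, (x j)^2) := by
    intro i
    rw [hy i]
    calc (∑ j, N i j * x j)^2 ≤ (∑ j, (N i j)^2) * (∑ j, (x j)^2) :=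
          Finset.sum_mul_sq_le_sq_mul_sq _ _ _
      _ ≤ ((b : ℝ) * c^2) * (∑ j, (x j)^2) := by
          refine mul_le_mul_of_nonneg_right ?_ (by positivity)
          calc (∑ j, (N i j)^2) ≤ ∑ _j : Fin b, c^2 := Finset.sum_le_sum fun j _ => by
                have := h i j; nlinarith [abs_nonneg (N i j), sq_abs (N i j)]
            _ = (b:ℝ) * c^2 := by rw [Finset.sum_const, Finset.card_univ, Fintype.card_fin, nsmul_eq_mul]
  have hsum : ∑ i, ((Matrix.toEuclideanLin N x) i)^2 ≤ ((a:ℝ)*b*c*‖x‖)^2 := by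
    calc ∑ i, ((Matrix.toEuclideanLin N x) i)^2 ≤ ∑ _i : Fin a, (b*c^2) * (∑ j, (x j)^2) :=
          Finset.sum_le_sum fun i _ => hrow i
      _ = (a:ℝ) * ((b*c^2) * (∑ j, (x j)^2)) := by rw [Finset.sum_const, Finset.card_univ, Fintype.card_fin, nsmul_eq_mul]
      _ ≤ ((a:ℝ)*b*c*‖x‖)^2 := by
          have hx2 : (∑ j, (x j)^2) = ‖x‖^2 := by
            rw [hnx, Real.sq_sqrt (by positivity)]
          rw [hx2]
          have h1 : (1:ℝ) ≤ a := by exact_mod_cast ha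
          have h2 : (1:ℝ) ≤ b := by exact_mod_cast hb
          have hab : (1:ℝ) ≤ (a:ℝ)*b := by nlinarith
          have key : (a:ℝ)*b ≤ ((a:ℝ)*b)^2 := by nlinarith
          calc (a:ℝ) * ((b*c^2) * ‖x‖^2) = ((a:ℝ)*b) * (c^2*‖x‖^2) := by ring
            _ ≤ ((a:ℝ)*b)^2 * (c^2*‖x‖^2) := by
                refine mul_le_mul_of_nonneg_right key (by positivity)
            _ = ((a:ℝ)*b*c*‖x‖)^2 := by ring
  calc ‖Matrix.toEuclideanLin N x‖ = Real.sqrt (∑ i, ((Matrix.toEuclideanLin N x) i)^2) := by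
        simp [EuclideanSpace.norm_eq, Real.norm_eq_abs, sq_abs]
    _ ≤ Real.sqrt (((a:ℝ)*b*c*‖x‖)^2) := Real.sqrt_le_sqrt hsum
    _ = (a:ℝ)*b*c*‖x‖ := Real.sqrt_sq (by positivity)

open scoped RealInnerProductSpace in
open Polynomial Matrix in
set_option maxHeartbeats 1000000 in
theorem near_kernel_aux (m n : ℕ) (hm : 0 < m) (hn : 0 < n)
    (T : ℝ) (hT : 1 ≤ T) (A : Matrix (Fin m) (Fin n) ℤ) (hA : ∀ i j, (|A i j| : ℝ) ≤ T)
    (v : EuclideanSpace ℝ (Fin n)) :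
    ∃ w : EuclideanSpace ℝ (Fin n),
      Matrix.toEuclideanLin (A.map (Int.cast : ℤ → ℝ)) w = 0 ∧
      ‖v - w‖ ≤ (((n:ℝ)+1) * ((n.factorial : ℝ) * (2*((m:ℝ)*1^2))^n) * ((n:ℝ) * n * ((m:ℝ)*1^2))^n * ((n:ℝ)*m*1)) * T^(4*n+1) *
        ‖Matrix.toEuclideanLin (A.map (Int.cast : ℤ → ℝ)) v‖ := by
  classical
  have hmR : (1:ℝ) ≤ m := by exact_mod_cast hm
  have hnR : (1:ℝ) ≤ n := by exact_mod_cast hn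
  set Ar : Matrix (Fin m) (Fin n) ℝ := A.map (Int.cast : ℤ → ℝ) with hArdef
  set L : EuclideanSpace ℝ (Fin n) →ₗ[ℝ] EuclideanSpace ℝ (Fin m) := Matrix.toEuclideanLin Ar with hLdef
  have hArT : ∀ i j, |Ar i j| ≤ T := fun i j => by
    simpa [hArdef, Matrix.map_apply] using hA i j
  set Mz : Matrix (Fin n) (Fin n) ℤ := Aᵀ * A with hMzdef
  set Mr : Matrix (Fin n) (Fin n) ℝ := Mz.map (Int.cast) with hMrdef
  have hMrEq : Mr = Arᴴ * Ar := by
    rw [Matrix.conjTranspose_eq_transpose_of_trivial]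
    ext i j
    simp only [hMrdef, hMzdef, hArdef, Matrix.map_apply, Matrix.mul_apply,
      Matrix.transpose_apply]
    push_cast
    ring
  set B : Module.End ℝ (EuclideanSpace ℝ (Fin n)) := Matrix.toEuclideanLin Mr with hBdef
  have hBL : B = (LinearMap.adjoint L) ∘ₗ L := by
    rw [hBdef, hMrEq, hLdef, ← Matrix.toEuclideanLin_conjTranspose_eq_adjoint]
    simp only [Matrix.toEuclideanLin_eq_toLin]
    exact Matrix.toLin_mul _ _ _ _ _
  have hinner : ∀ x y : EuclideanSpace ℝ (Fin n), ⟪B x, y⟫ = ⟪L x, L y⟫ := by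
    intro x y
    rw [hBL]
    exact LinearMap.adjoint_inner_left L y (L x)
  have hinner' : ∀ x y : EuclideanSpace ℝ (Fin n), ⟪x, B y⟫ = ⟪L x, L y⟫ := by
    intro x y
    rw [real_inner_comm, hinner, real_inner_comm]
  -- entry bound for Mr
  have hMrT : ∀ i j, |Mr i j| ≤ (m:ℝ) * T^2 := by
    intro i j
    rw [hMrEq]
    rw [Matrix.conjTranspose_eq_transpose_of_trivial]
    calc |(Arᵀ * Ar) i j| = |∑ l, Ar l i * Ar l j| := by
          rw [Matrix.mul_apply]; simp [Matrix.transpose_apply]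
      _ ≤ ∑ l, |Ar l i * Ar l j| := Finset.abs_sum_le_sum_abs _ _
      _ ≤ ∑ _l : Fin m, T * T := Finset.sum_le_sum fun l _ => by
          rw [abs_mul]
          exact mul_le_mul (hArT l i) (hArT l j) (abs_nonneg _) (by linarith)
      _ = (m:ℝ) * T^2 := by
          rw [Finset.sum_const, Finset.card_univ, Fintype.card_fin, nsmul_eq_mul]; ring
  set K := LinearMap.ker L with hKdef
  have hkerB : ∀ x, B x = 0 → L x = 0 := by
    intro x hx
    have : ⟪L x, L x⟫ = 0 := by rw [← hinner, hx, inner_zero_left]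
    exact inner_self_eq_zero.mp this
  have hrange : ∀ x, B x ∈ Kᗮ := by
    intro x
    rw [Submodule.mem_orthogonal]
    intro z hz
    rw [hinner', show L z = 0 from hz, inner_zero_left]
  have hsq : ∀ x, B (B x) = 0 → B x = 0 := by
    intro x hx
    have : ⟪B x, B x⟫ = 0 := by
      rw [hinner, ← hinner', hx, inner_zero_right]
    exact inner_self_eq_zero.mp this
  have hkerpow : ∀ j x, (B ^ (j+1)) x = 0 → B x = 0 := by
    intro j
    induction j with
    | zero => intro x hx; simpa [pow_one] using hx
    | succ j ih =>
      intro x hx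
      have h1 : (B ^ (j+1)) (B x) = 0 := by
        rw [← Module.End.mul_apply, ← pow_succ]
        exact hx
      exact hsq x (ih (B x) h1)
  -- characteristic polynomial over ℤ
  set p : Polynomial ℤ := Mz.charpoly with hpdef
  have hp_ne : p ≠ 0 := (Mz.charpoly_monic).ne_zero
  set k : ℕ := p.natTrailingDegree with hkdef
  have hdvd : (X : Polynomial ℤ) ^ k ∣ p :=
    X_pow_dvd_iff.mpr fun d hd => coeff_eq_zero_of_lt_natTrailingDegree hd
  obtain ⟨q, hq⟩ := hdvd
  have hq0 : q.coeff 0 ≠ 0 := by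
    have h1 : p.coeff k = q.coeff 0 := by
      conv_lhs => rw [hq]
      simpa using coeff_X_pow_mul q k 0
    have h2 : p.coeff k ≠ 0 := by
      rw [hkdef]
      exact trailingCoeff_nonzero_iff_nonzero.mpr hp_ne
    rw [← h1]; exact h2
  -- over ℝ
  set pr : Polynomial ℝ := p.map (Int.castRingHom ℝ) with hprdef
  set qr : Polynomial ℝ := q.map (Int.castRingHom ℝ) with hqrdef
  have hpr_charpoly : Mr.charpoly = pr := by
    rw [hprdef, hpdef, ← Matrix.charpoly_map]
    rfl
  have hpr_fact : pr = X ^ k * qr := by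
    rw [hprdef, hq]
    simp [Polynomial.map_mul, Polynomial.map_pow]
    rfl
  have hqr0 : qr.coeff 0 ≠ 0 := by
    rw [hqrdef]
    simpa [coeff_map] using fun h => hq0 (by exact_mod_cast h)
  have hqr_ne : qr ≠ 0 := fun h => hqr0 (by rw [h]; simp)
  -- Cayley–Hamilton transported to the endomorphism B
  have hB_alg : B = Matrix.toLinAlgEquiv (PiLp.basisFun 2 ℝ (Fin n)) Mr := rfl
  have haevalB : Polynomial.aeval B pr = 0 := by
    rw [hB_alg, Polynomial.aeval_algHom_apply, ← hpr_charpoly,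
      Matrix.aeval_self_charpoly, map_zero]
  have hBk_q : (B ^ k) * (Polynomial.aeval B qr) = 0 := by
    have := haevalB
    rw [hpr_fact, _root_.map_mul, map_pow, aeval_X] at this
    exact this
  -- coefficient bounds
  have hB1 : (1:ℝ) ≤ (m:ℝ) * T^2 := by nlinarith
  set Q : ℝ := (n.factorial : ℝ) * (2*((m:ℝ)*T^2))^n with hQdef
  have hQ0 : 0 ≤ Q := by positivity
  have hpr_coeff : ∀ j, |pr.coeff j| ≤ Q := by
    intro j
    rw [← hpr_charpoly]
    exact charpoly_coeff_bound Mr ((m:ℝ)*T^2) hB1 hMrT j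
  have hqr_coeff : ∀ i, |qr.coeff i| ≤ Q := by
    intro i
    have : pr.coeff (i + k) = qr.coeff i := by
      conv_lhs => rw [hpr_fact]
      exact coeff_X_pow_mul qr k i
    rw [← this]; exact hpr_coeff _
  have hpr_deg : pr.natDegree = n := by
    rw [← hpr_charpoly, Matrix.charpoly_natDegree_eq_dim, Fintype.card_fin]
  have hqr_deg : qr.natDegree ≤ n := by
    have hX : (X : Polynomial ℝ) ^ k ≠ 0 := pow_ne_zero _ X_ne_zero
    have := natDegree_mul hX hqr_ne
    rw [← hpr_fact, hpr_deg, natDegree_X_pow] at this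
    omega
  set r : Polynomial ℝ := qr.divX with hrdef
  have hr_deg : r.natDegree ≤ n := le_trans natDegree_divX_le hqr_deg
  have hr_coeff : ∀ i, |r.coeff i| ≤ Q := fun i => by
    rw [hrdef, coeff_divX]; exact hqr_coeff _
  -- norm bounds
  set R : ℝ := (n:ℝ) * n * ((m:ℝ)*T^2) with hRdef
  have hR1 : (1:ℝ) ≤ R := by rw [hRdef]; nlinarith
  have hR0 : 0 ≤ R := by linarith
  have hBnorm : ∀ y, ‖B y‖ ≤ R * ‖y‖ := by
    intro y
    rw [hBdef]
    simpa [hRdef] using euclidean_norm_bound hn hn Mr ((m:ℝ)*T^2) (by linarith) hMrT y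
  have hpowB : ∀ (i : ℕ) y, ‖(B ^ i) y‖ ≤ R ^ i * ‖y‖ := by
    intro i
    induction i with
    | zero => intro y; simp
    | succ i ih =>
      intro y
      have h1 : (B ^ (i+1)) y = (B ^ i) (B y) := by
        rw [pow_succ, Module.End.mul_apply]
      rw [h1]
      calc ‖(B ^ i) (B y)‖ ≤ R ^ i * ‖B y‖ := ih (B y)
        _ ≤ R ^ i * (R * ‖y‖) := by
            refine mul_le_mul_of_nonneg_left (hBnorm y) (by positivity)
        _ = R ^ (i+1) * ‖y‖ := by ring
  have haevalr : ∀ y, ‖(Polynomial.aeval B r) y‖ ≤ ((n:ℝ)+1) * Q * R^n * ‖y‖ := by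
    intro y
    have hsum : (Polynomial.aeval B r) y
        = ∑ i ∈ Finset.range (r.natDegree + 1), r.coeff i • ((B ^ i) y) := by
      rw [aeval_eq_sum_range]
      rw [LinearMap.sum_apply]
      exact Finset.sum_congr rfl fun i _ => by rw [LinearMap.smul_apply]
    rw [hsum]
    calc ‖∑ i ∈ Finset.range (r.natDegree + 1), r.coeff i • ((B ^ i) y)‖
        ≤ ∑ i ∈ Finset.range (r.natDegree + 1), ‖r.coeff i • ((B ^ i) y)‖ :=
          norm_sum_le _ _
      _ ≤ ∑ _i ∈ Finset.range (r.natDegree + 1), Q * (R^n * ‖y‖) := by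
          refine Finset.sum_le_sum fun i hi => ?_
          rw [norm_smul, Real.norm_eq_abs]
          have hi' : i ≤ n := by
            have := Finset.mem_range.mp hi; omega
          have h2 : ‖(B ^ i) y‖ ≤ R^n * ‖y‖ := by
            refine le_trans (hpowB i y) ?_
            refine mul_le_mul_of_nonneg_right (pow_le_pow_right₀ hR1 hi') (norm_nonneg _)
          exact mul_le_mul (hr_coeff i) h2 (norm_nonneg _) hQ0
      _ = ((r.natDegree : ℝ)+1) * (Q * (R^n * ‖y‖)) := by
          rw [Finset.sum_const, Finset.card_range, nsmul_eq_mul]; push_cast; ring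
      _ ≤ ((n:ℝ)+1) * Q * R^n * ‖y‖ := by
          have : ((r.natDegree : ℝ)+1) ≤ (n:ℝ)+1 := by
            have : (r.natDegree : ℝ) ≤ n := by exact_mod_cast hr_deg
            linarith
          have h3 : (0:ℝ) ≤ Q * (R^n * ‖y‖) := by positivity
          nlinarith [this, h3]
  have hadj : ∀ y, ‖(LinearMap.adjoint L) y‖ ≤ (n:ℝ)*m*T*‖y‖ := by
    intro y
    have h1 : LinearMap.adjoint L = Matrix.toEuclideanLin Arᴴ := by
      rw [hLdef, Matrix.toEuclideanLin_conjTranspose_eq_adjoint]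
    rw [h1]
    refine euclidean_norm_bound hn hm Arᴴ T (by linarith) ?_ y
    intro i j
    rw [Matrix.conjTranspose_eq_transpose_of_trivial]
    exact hArT j i
  -- the projection onto the kernel
  set w : EuclideanSpace ℝ (Fin n) := (K.orthogonalProjectionOnto v : EuclideanSpace ℝ (Fin n)) with hwdef
  have hwK : w ∈ K := Submodule.coe_mem _
  have hLw : L w = 0 := hwK
  set u : EuclideanSpace ℝ (Fin n) := v - w with hudef
  have hu : u ∈ Kᗮ := K.sub_starProjection_mem_orthogonal v
  have hLu : L u = L v := by rw [hudef, map_sub, hLw, sub_zero]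
  set z := (Polynomial.aeval B qr) u with hzdef
  have hz_pow : (B ^ k) z = 0 := by
    have h0 : ((B ^ k) * (Polynomial.aeval B qr)) u = (0 : Module.End ℝ (EuclideanSpace ℝ (Fin n))) u := by
      rw [hBk_q]
    simpa [Module.End.mul_apply] using h0
  have e1 : Polynomial.aeval B qr
      = B * (Polynomial.aeval B r) + algebraMap ℝ (Module.End ℝ (EuclideanSpace ℝ (Fin n))) (qr.coeff 0) := by
    conv_lhs => rw [show qr = X * r + C (qr.coeff 0) from (X_mul_divX_add qr).symm]
    rw [map_add, _root_.map_mul, aeval_X, aeval_C]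
  have hzdecomp : z = B ((Polynomial.aeval B r) u) + qr.coeff 0 • u := by
    rw [hzdef, e1]
    simp [Module.End.mul_apply, LinearMap.add_apply, Module.algebraMap_end_apply]
  have hzK : L z = 0 := by
    rcases Nat.eq_zero_or_pos k with hk | hk
    · rw [hk, pow_zero] at hz_pow
      have : z = 0 := by simpa using hz_pow
      rw [this, map_zero]
    · obtain ⟨j, hj⟩ := Nat.exists_eq_succ_of_ne_zero (Nat.pos_iff_ne_zero.mp hk)
      rw [hj] at hz_pow
      exact hkerB z (hkerpow j z hz_pow)
  have hz_orth : z ∈ Kᗮ := by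
    rw [hzdecomp]
    exact Submodule.add_mem _ (hrange _) (Submodule.smul_mem _ _ hu)
  have hz0 : z = 0 := by
    have h1 : z ∈ K := by rw [hKdef]; exact LinearMap.mem_ker.mpr hzK
    have h2 : ⟪z, z⟫ = 0 := (Submodule.mem_orthogonal K z).mp hz_orth z h1
    exact inner_self_eq_zero.mp h2
  have hmain : qr.coeff 0 • u = - (B ((Polynomial.aeval B r) u)) := by
    have h0 : B ((Polynomial.aeval B r) u) + qr.coeff 0 • u = 0 := by
      rw [← hzdecomp, hz0]
    exact (neg_eq_of_add_eq_zero_right h0).symm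
  have hcomm : B ((Polynomial.aeval B r) u) = (Polynomial.aeval B r) (B u) := by
    have hc : B * (Polynomial.aeval B r) = (Polynomial.aeval B r) * B := by
      calc B * Polynomial.aeval B r = Polynomial.aeval B (X * r) := by
            rw [_root_.map_mul, aeval_X]
        _ = Polynomial.aeval B (r * X) := by rw [mul_comm]
        _ = Polynomial.aeval B r * B := by rw [_root_.map_mul, aeval_X]
    calc B ((Polynomial.aeval B r) u) = (B * (Polynomial.aeval B r)) u := by
          rw [Module.End.mul_apply]
      _ = ((Polynomial.aeval B r) * B) u := by rw [hc]
      _ = (Polynomial.aeval B r) (B u) := by rw [Module.End.mul_apply]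
  have hc1 : (1:ℝ) ≤ |qr.coeff 0| := by
    have hqq : qr.coeff 0 = ((q.coeff 0 : ℤ) : ℝ) := by rw [hqrdef]; simp [coeff_map]
    rw [hqq, ← Int.cast_abs]
    exact_mod_cast Int.one_le_abs hq0
  have h5 : ‖B u‖ ≤ (n:ℝ)*m*T * ‖L u‖ := by
    have hBu : B u = (LinearMap.adjoint L) (L u) := by rw [hBL, LinearMap.comp_apply]
    rw [hBu]
    exact hadj (L u)
  have hfinal : ‖u‖ ≤ ((n:ℝ)+1) * Q * R^n * ((n:ℝ)*m*T) * ‖L v‖ := by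
    have h1 : ‖u‖ ≤ |qr.coeff 0| * ‖u‖ := le_mul_of_one_le_left (norm_nonneg u) hc1
    have h2 : |qr.coeff 0| * ‖u‖ = ‖(Polynomial.aeval B r) (B u)‖ := by
      rw [← Real.norm_eq_abs, ← norm_smul, hmain, norm_neg, hcomm]
    have h4 : ‖(Polynomial.aeval B r) (B u)‖ ≤ ((n:ℝ)+1) * Q * R^n * ‖B u‖ := haevalr _
    have h6 : ((n:ℝ)+1) * Q * R^n * ‖B u‖ ≤ ((n:ℝ)+1) * Q * R^n * ((n:ℝ)*m*T * ‖L u‖) := by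
      refine mul_le_mul_of_nonneg_left h5 (by positivity)
    rw [hLu] at h6
    calc ‖u‖ ≤ |qr.coeff 0| * ‖u‖ := h1
      _ = ‖(Polynomial.aeval B r) (B u)‖ := h2
      _ ≤ ((n:ℝ)+1) * Q * R^n * ‖B u‖ := h4
      _ ≤ ((n:ℝ)+1) * Q * R^n * ((n:ℝ)*m*T * ‖L v‖) := h6
      _ = ((n:ℝ)+1) * Q * R^n * ((n:ℝ)*m*T) * ‖L v‖ := by ring
  refine ⟨w, hLw, ?_⟩
  have hconst : ((n:ℝ)+1) * Q * R^n * ((n:ℝ)*m*T)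
      = (((n:ℝ)+1) * ((n.factorial : ℝ) * (2*((m:ℝ)*1^2))^n) * ((n:ℝ) * n * ((m:ℝ)*1^2))^n * ((n:ℝ)*m*1)) * T^(4*n+1) := by
    rw [hQdef, hRdef]
    ring
  calc ‖v - w‖ = ‖u‖ := by rw [hudef]
    _ ≤ ((n:ℝ)+1) * Q * R^n * ((n:ℝ)*m*T) * ‖L v‖ := hfinal
    _ = (((n:ℝ)+1) * ((n.factorial : ℝ) * (2*((m:ℝ)*1^2))^n) * ((n:ℝ) * n * ((m:ℝ)*1^2))^n * ((n:ℝ)*m*1)) * T^(4*n+1) * ‖L v‖ := by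
        rw [hconst]


/-- Quantitative linear algebra lemma: if an integer matrix `A` with entries of
absolute value at most `T` almost annihilates a vector `v`, then some vector `w`
in the kernel of `A` is within distance `C ⬝ T^κ ⬝ ‖A v‖` of `v`. -/
theorem near_kernel_of_small_image (m n : ℕ) (hm : 0 < m) (hn : 0 < n) :
    ∃ C > (0 : ℝ), ∃ κ > (0 : ℝ),
      ∀ T : ℝ, 1 ≤ T →
        ∀ A : Matrix (Fin m) (Fin n) ℤ, (∀ i j, (|A i j| : ℝ) ≤ T) →
          ∀ v : EuclideanSpace ℝ (Fin n),
            ∃ w : EuclideanSpace ℝ (Fin n),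
              Matrix.toEuclideanLin (A.map (Int.cast : ℤ → ℝ)) w = 0 ∧
              ‖v - w‖ ≤ C * T ^ κ *
                ‖Matrix.toEuclideanLin (A.map (Int.cast : ℤ → ℝ)) v‖ := by
  have hmR : (0:ℝ) < m := by exact_mod_cast hm
  have hnR : (0:ℝ) < n := by exact_mod_cast hn
  refine ⟨((n:ℝ)+1) * ((n.factorial : ℝ) * (2*((m:ℝ)*1^2))^n) * ((n:ℝ) * n * ((m:ℝ)*1^2))^n * ((n:ℝ)*m*1), ?_, ((4*n+1 : ℕ) : ℝ), ?_, ?_⟩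
  · have h1 : (0:ℝ) < (n:ℝ)+1 := by positivity
    have h2 : (0:ℝ) < (n.factorial : ℝ) * (2*((m:ℝ)*1^2))^n :=
      mul_pos (by exact_mod_cast n.factorial_pos) (pow_pos (by nlinarith) n)
    have h3 : (0:ℝ) < ((n:ℝ) * n * ((m:ℝ)*1^2))^n := pow_pos (by nlinarith [mul_pos hnR hnR, mul_pos (mul_pos hnR hnR) hmR]) n
    have h4 : (0:ℝ) < (n:ℝ)*m*1 := by nlinarith [mul_pos hnR hmR]
    exact mul_pos (mul_pos (mul_pos h1 h2) h3) h4
  · have : (0:ℕ) < 4*n+1 := by omega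
    exact_mod_cast this
  · intro T hT A hA v
    obtain ⟨w, hw1, hw2⟩ := near_kernel_aux m n hm hn T hT A hA v
    refine ⟨w, hw1, ?_⟩
    rw [Real.rpow_natCast]
    exact hw2
end

section
/- Let δ ∈ (0, 1/100) and τ ≥ 1. For all q₁, q₂ ∈ Q_G(δ, τ) and all choices of signs ε₁, ε₂ ∈ {+1, −1}, the product q₁^{ε₁} · q₂^{ε₂} lies in Q_G(10δ, τ). -/
/-- The lower unipotent `ū_s = [[1,0],[s,1]]` as an element of SL(2,ℝ). -/
noncomputable def lowU (s : ℝ) : Matrix.SpecialLinearGroup (Fin 2) ℝ :=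
  ⟨!![1, 0; s, 1], by simp [Matrix.det_fin_two_of]⟩

/-- The upper unipotent `u_r = [[1,r],[0,1]]` as an element of SL(2,ℝ). -/
noncomputable def upU (r : ℝ) : Matrix.SpecialLinearGroup (Fin 2) ℝ :=
  ⟨!![1, r; 0, 1], by simp [Matrix.det_fin_two_of]⟩

/-- The diagonal `a_w = [[e^{w/2},0],[0,e^{-w/2}]]` as an element of SL(2,ℝ). -/
noncomputable def diagA (w : ℝ) : Matrix.SpecialLinearGroup (Fin 2) ℝ :=
  ⟨!![Real.exp (w / 2), 0; 0, Real.exp (-(w / 2))], by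
    simp [Matrix.det_fin_two_of, ← Real.exp_add]⟩

/-- The box `Q_G(δ,τ) = ū_{[-δ/τ,δ/τ]} ⬝ a_{[-δ,δ]} ⬝ u_{[-δ,δ]}` in SL(2,ℝ). -/
def QG (δ τ : ℝ) : Set (Matrix.SpecialLinearGroup (Fin 2) ℝ) :=
  {g | ∃ s w v : ℝ, |s| ≤ δ / τ ∧ |w| ≤ δ ∧ |v| ≤ δ ∧ g = lowU s * diagA w * upU v}

lemma prod_form (s₁ w₁ v₁ s₂ w₂ v₂ : ℝ) (h : 0 < 1 + v₁*s₂) :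
    (lowU s₁ * diagA w₁ * upU v₁) * (lowU s₂ * diagA w₂ * upU v₂) =
    lowU (s₁ + (s₂/(1+v₁*s₂)) * Real.exp (-w₁)) *
      diagA (w₁ + 2*Real.log (1+v₁*s₂) + w₂) *
      upU ((v₁/(1+v₁*s₂)) * Real.exp (-w₂) + v₂) := by
  have hE : Real.exp (Real.log (1+v₁*s₂)) = 1+v₁*s₂ := Real.exp_log h
  have e1 : (w₁ + 2*Real.log (1+v₁*s₂) + w₂)/2 = w₁/2 + Real.log (1+v₁*s₂) + w₂/2 := by ring
  have e2 : -((w₁ + 2*Real.log (1+v₁*s₂) + w₂)/2)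
      = -(w₁/2) + -(Real.log (1+v₁*s₂)) + -(w₂/2) := by ring
  have hw1 : Real.exp w₁ = Real.exp (w₁/2) * Real.exp (w₁/2) := by rw [← Real.exp_add]; ring_nf
  have hw2 : Real.exp w₂ = Real.exp (w₂/2) * Real.exp (w₂/2) := by rw [← Real.exp_add]; ring_nf
  ext i j
  simp only [Matrix.SpecialLinearGroup.coe_mul]
  fin_cases i <;> fin_cases j <;>
    · simp [lowU, upU, diagA, Matrix.mul_apply, Fin.sum_univ_two, e1, e2, Real.exp_add, hE,
        Real.exp_neg]
      try field_simp
      try simp only [hw1, hw2]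
      try ring

lemma inv_decomp (s w v : ℝ) :
    (lowU s * diagA w * upU v)⁻¹ =
    (lowU 0 * diagA (-w) * upU (-v * Real.exp w)) * (lowU (-s) * diagA 0 * upU 0) := by
  apply inv_eq_of_mul_eq_one_right
  have h0 : Real.exp (w/2) ≠ 0 := (Real.exp_pos _).ne'
  have a1 : Real.exp (-w / 2) = (Real.exp (w/2))⁻¹ := by rw [← Real.exp_neg]; ring_nf
  have a2 : Real.exp (-(-w / 2)) = Real.exp (w/2) := by ring_nf
  have a3 : Real.exp w = Real.exp (w/2) * Real.exp (w/2) := by rw [← Real.exp_add]; ring_nf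
  have a4 : Real.exp (-(w/2)) = (Real.exp (w/2))⁻¹ := Real.exp_neg _
  ext i j
  simp only [Matrix.SpecialLinearGroup.coe_mul]
  fin_cases i <;> fin_cases j <;>
    · simp [lowU, upU, diagA, Matrix.mul_apply, Fin.sum_univ_two, a1, a2, a3, a4]
      try field_simp
      try ring

lemma exp_le_inv_one_sub {b : ℝ} (hb : b < 1) : Real.exp b ≤ (1-b)⁻¹ := by
  have h1 : 1 - b ≤ Real.exp (-b) := by have := Real.add_one_le_exp (-b); linarith
  have h3 : (0:ℝ) < 1 - b := by linarith
  have h2 : Real.exp b * (1 - b) ≤ 1 := by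
    calc Real.exp b * (1-b) ≤ Real.exp b * Real.exp (-b) :=
          mul_le_mul_of_nonneg_left h1 (Real.exp_pos _).le
    _ = 1 := by rw [← Real.exp_add]; simp
  calc Real.exp b = Real.exp b * (1-b) * (1-b)⁻¹ := by field_simp
  _ ≤ 1 * (1-b)⁻¹ := mul_le_mul_of_nonneg_right h2 (by positivity)
  _ = (1-b)⁻¹ := one_mul _

lemma exp_bd {w d : ℝ} (hw : |w| ≤ d) (hd : d ≤ 1/50) : Real.exp w ≤ 26/25 := by
  have h1 : w ≤ 1/50 := le_trans (le_of_abs_le hw) hd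
  calc Real.exp w ≤ Real.exp (1/50) := Real.exp_le_exp.2 h1
  _ ≤ (1 - 1/50)⁻¹ := exp_le_inv_one_sub (by norm_num)
  _ ≤ 26/25 := by norm_num

lemma abs_log_le {x : ℝ} (hx : |x| ≤ 1/2) : |Real.log (1+x)| ≤ 2 * |x| := by
  obtain ⟨hl, hr⟩ := abs_le.mp hx
  have h1 : (0:ℝ) < 1 + x := by linarith
  have hxa : x ≤ |x| := le_abs_self x
  have hxa' : -|x| ≤ x := neg_abs_le x
  rw [abs_le]
  constructor
  · have hinv : (0:ℝ) < (1+x)⁻¹ := by positivity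
    have h2 := Real.log_le_sub_one_of_pos hinv
    rw [Real.log_inv] at h2
    -- h2 : -log(1+x) ≤ (1+x)⁻¹ - 1
    have h4 : (1+x) * (1+x)⁻¹ = 1 := mul_inv_cancel₀ h1.ne'
    -- show (1+x)⁻¹ - 1 ≤ 2|x|
    have h5 : (1+x)⁻¹ - 1 ≤ 2 * |x| := by nlinarith [abs_nonneg x]
    linarith
  · have h2 := Real.log_le_sub_one_of_pos h1
    calc Real.log (1+x) ≤ x := by linarith
    _ ≤ 2 * |x| := by nlinarith [abs_nonneg x]

lemma QG_mul {δ₁ δ₂ τ : ℝ} (h₁ : 0 < δ₁) (h₁' : δ₁ ≤ 1/50) (h₂ : 0 < δ₂) (h₂' : δ₂ ≤ 1/50)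
    (hτ : 1 ≤ τ) {q₁ q₂ : Matrix.SpecialLinearGroup (Fin 2) ℝ}
    (hq₁ : q₁ ∈ QG δ₁ τ) (hq₂ : q₂ ∈ QG δ₂ τ) :
    q₁ * q₂ ∈ QG (2*(δ₁+δ₂)) τ := by
  obtain ⟨s₁, w₁, v₁, hs₁, hw₁, hv₁, rfl⟩ := hq₁
  obtain ⟨s₂, w₂, v₂, hs₂, hw₂, hv₂, rfl⟩ := hq₂
  have hτ0 : (0:ℝ) < τ := lt_of_lt_of_le one_pos hτ
  have hs₁' : |s₁| ≤ δ₁ := hs₁.trans (by rw [div_le_iff₀ hτ0]; nlinarith)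
  have hs₂' : |s₂| ≤ δ₂ := hs₂.trans (by rw [div_le_iff₀ hτ0]; nlinarith)
  have hx : |v₁ * s₂| ≤ δ₁ * δ₂ := by
    rw [abs_mul]; exact mul_le_mul hv₁ hs₂' (abs_nonneg _) h₁.le
  have hx2 : |v₁ * s₂| ≤ 1/2500 := hx.trans (by nlinarith)
  obtain ⟨hxl, hxr⟩ := abs_le.mp hx2
  have hE : 0 < 1 + v₁ * s₂ := by linarith
  have hEi : (1 + v₁*s₂)⁻¹ ≤ 26/25 := by
    have h25 : (25/26 : ℝ) ≤ 1 + v₁*s₂ := by linarith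
    calc (1 + v₁*s₂)⁻¹ ≤ ((25:ℝ)/26)⁻¹ := by
          apply inv_anti₀ (by norm_num) h25
    _ = 26/25 := by norm_num
  have hEi0 : (0:ℝ) < (1 + v₁*s₂)⁻¹ := by positivity
  rw [prod_form _ _ _ _ _ _ hE]
  refine ⟨_, _, _, ?_, ?_, ?_, rfl⟩
  · -- s bound
    have hA : Real.exp (-w₁) ≤ 26/25 := exp_bd (by rwa [abs_neg]) h₁'
    calc |s₁ + s₂/(1+v₁*s₂) * Real.exp (-w₁)|
        ≤ |s₁| + |s₂| * (1+v₁*s₂)⁻¹ * Real.exp (-w₁) := by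
          rw [div_eq_mul_inv]
          calc |s₁ + s₂ * (1+v₁*s₂)⁻¹ * Real.exp (-w₁)|
              ≤ |s₁| + |s₂ * (1+v₁*s₂)⁻¹ * Real.exp (-w₁)| := abs_add_le _ _
          _ = |s₁| + |s₂| * (1+v₁*s₂)⁻¹ * Real.exp (-w₁) := by
                rw [abs_mul, abs_mul, abs_of_pos hEi0, abs_of_pos (Real.exp_pos _)]
    _ ≤ δ₁/τ + (δ₂/τ) * (26/25) * (26/25) := by gcongr
    _ ≤ 2*(δ₁+δ₂)/τ := by
          have hd1 : 0 ≤ δ₁/τ := div_nonneg h₁.le hτ0.le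
          have hd2 : 0 ≤ δ₂/τ := div_nonneg h₂.le hτ0.le
          have h6 : 2*(δ₁+δ₂)/τ = 2*(δ₁/τ) + 2*(δ₂/τ) := by ring
          linarith
  · -- w bound
    have hlog : |Real.log (1 + v₁*s₂)| ≤ 2 * |v₁*s₂| := abs_log_le (hx2.trans (by norm_num))
    calc |w₁ + 2*Real.log (1+v₁*s₂) + w₂|
        ≤ |w₁| + 2*|Real.log (1+v₁*s₂)| + |w₂| := by
          have := abs_add_le (w₁ + 2*Real.log (1+v₁*s₂)) w₂
          have := abs_add_le w₁ (2*Real.log (1+v₁*s₂))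
          have := abs_mul (2:ℝ) (Real.log (1+v₁*s₂))
          simp only [abs_two] at this
          linarith [abs_add_le (w₁ + 2*Real.log (1+v₁*s₂)) w₂, abs_add_le w₁ (2*Real.log (1+v₁*s₂))]
    _ ≤ δ₁ + 4*(δ₁*δ₂) + δ₂ := by
          have := hlog.trans (by linarith : 2*|v₁*s₂| ≤ 2*(δ₁*δ₂))
          linarith
    _ ≤ 2*(δ₁+δ₂) := by nlinarith
  · -- v bound
    have hA : Real.exp (-w₂) ≤ 26/25 := exp_bd (by rwa [abs_neg]) h₂'
    calc |v₁/(1+v₁*s₂) * Real.exp (-w₂) + v₂|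
        ≤ |v₁| * (1+v₁*s₂)⁻¹ * Real.exp (-w₂) + |v₂| := by
          rw [div_eq_mul_inv]
          calc |v₁ * (1+v₁*s₂)⁻¹ * Real.exp (-w₂) + v₂|
              ≤ |v₁ * (1+v₁*s₂)⁻¹ * Real.exp (-w₂)| + |v₂| := abs_add_le _ _
          _ = |v₁| * (1+v₁*s₂)⁻¹ * Real.exp (-w₂) + |v₂| := by
                rw [abs_mul, abs_mul, abs_of_pos hEi0, abs_of_pos (Real.exp_pos _)]
    _ ≤ δ₁ * (26/25) * (26/25) + δ₂ := by gcongr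
    _ ≤ 2*(δ₁+δ₂) := by nlinarith

lemma QG_inv {δ τ : ℝ} (h : 0 < δ) (h' : δ ≤ 1/100) (hτ : 1 ≤ τ)
    {q : Matrix.SpecialLinearGroup (Fin 2) ℝ} (hq : q ∈ QG δ τ) : q⁻¹ ∈ QG (2*δ) τ := by
  obtain ⟨s, w, v, hs, hw, hv, rfl⟩ := hq
  have hτ0 : (0:ℝ) < τ := lt_of_lt_of_le one_pos hτ
  have hs' : |s| ≤ δ := hs.trans (by rw [div_le_iff₀ hτ0]; nlinarith)
  have hexp : Real.exp w ≤ 26/25 := exp_bd hw (by linarith)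
  have hx : |(-v * Real.exp w) * (-s)| ≤ δ * (26/25) * δ := by
    rw [abs_mul, abs_mul, abs_neg, abs_neg, abs_of_pos (Real.exp_pos _)]
    gcongr
  have hx2 : |(-v * Real.exp w) * (-s)| ≤ 1/2500 := by nlinarith [hx]
  obtain ⟨hxl, hxr⟩ := abs_le.mp hx2
  have hE' : 0 < 1 + -v * Real.exp w * -s := by
    have : (-v * Real.exp w) * (-s) = -v * Real.exp w * -s := by ring
    linarith [this ▸ hxl]
  have hEi : (1 + -v * Real.exp w * -s)⁻¹ ≤ 26/25 := by
    have h25 : (25/26 : ℝ) ≤ 1 + -v * Real.exp w * -s := by linarith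
    calc (1 + -v * Real.exp w * -s)⁻¹ ≤ ((25:ℝ)/26)⁻¹ := inv_anti₀ (by norm_num) h25
    _ = 26/25 := by norm_num
  have hEi0 : (0:ℝ) < (1 + -v * Real.exp w * -s)⁻¹ := by positivity
  rw [inv_decomp, prod_form 0 (-w) (-v * Real.exp w) (-s) 0 0 hE']
  refine ⟨_, _, _, ?_, ?_, ?_, rfl⟩
  · -- s bound
    have hA : Real.exp (-(-w)) ≤ 26/25 := exp_bd (by simpa using hw) (by linarith)
    calc |0 + -s/(1 + -v * Real.exp w * -s) * Real.exp (-(-w))|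
        = |s| * (1 + -v * Real.exp w * -s)⁻¹ * Real.exp (-(-w)) := by
          rw [zero_add, div_eq_mul_inv, abs_mul, abs_mul, abs_neg,
            abs_of_pos hEi0, abs_of_pos (Real.exp_pos _)]
    _ ≤ (δ/τ) * (26/25) * (26/25) := by gcongr
    _ ≤ 2*δ/τ := by
          have hd : 0 ≤ δ/τ := div_nonneg h.le hτ0.le
          have h6 : 2*δ/τ = 2*(δ/τ) := by ring
          linarith
  · -- w bound
    have hlog : |Real.log (1 + -v * Real.exp w * -s)| ≤ 2 * |(-v * Real.exp w) * (-s)| :=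
      abs_log_le (hx2.trans (by norm_num))
    have hlog' : |Real.log (1 + -v * Real.exp w * -s)| ≤ 2 * (δ * (26/25) * δ) :=
      hlog.trans (by linarith)
    calc |(-w) + 2*Real.log (1 + -v * Real.exp w * -s) + 0|
        ≤ |w| + 2*|Real.log (1 + -v * Real.exp w * -s)| := by
          rw [add_zero]
          calc |(-w) + 2*Real.log (1 + -v * Real.exp w * -s)|
              ≤ |(-w)| + |2*Real.log (1 + -v * Real.exp w * -s)| := abs_add_le _ _
          _ = |w| + 2*|Real.log (1 + -v * Real.exp w * -s)| := by
                rw [abs_neg, abs_mul, abs_two]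
    _ ≤ δ + 4*(δ * (26/25) * δ) := by linarith
    _ ≤ 2*δ := by nlinarith
  · -- v bound
    calc |(-v * Real.exp w)/(1 + -v * Real.exp w * -s) * Real.exp (-0) + 0|
        = |v| * Real.exp w * (1 + -v * Real.exp w * -s)⁻¹ := by
          rw [add_zero, neg_zero, Real.exp_zero, mul_one, div_eq_mul_inv, abs_mul, abs_mul,
            abs_neg, abs_of_pos (Real.exp_pos _), abs_of_pos hEi0]
    _ ≤ δ * (26/25) * (26/25) := by gcongr
    _ ≤ 2*δ := by nlinarith

lemma QG_mono {δ δ' τ : ℝ} (hτ : 0 < τ) (hd : δ ≤ δ') : QG δ τ ⊆ QG δ' τ := by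
  rintro g ⟨s, w, v, hs, hw, hv, rfl⟩
  exact ⟨s, w, v, hs.trans (by gcongr), hw.trans hd, hv.trans hd, rfl⟩

/-- Products of boxes: for `q₁, q₂ ∈ Q_G(δ,τ)` and signs `ε₁, ε₂ ∈ {±1}`,
`q₁^{ε₁} q₂^{ε₂} ∈ Q_G(10δ, τ)`. -/
theorem QG_mul_QG (δ τ : ℝ) (hδ : δ ∈ Set.Ioo (0 : ℝ) (1 / 100)) (hτ : 1 ≤ τ)
    (q₁ q₂ : Matrix.SpecialLinearGroup (Fin 2) ℝ)
    (hq₁ : q₁ ∈ QG δ τ) (hq₂ : q₂ ∈ QG δ τ)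
    (ε₁ ε₂ : ℤ) (hε₁ : ε₁ = 1 ∨ ε₁ = -1) (hε₂ : ε₂ = 1 ∨ ε₂ = -1) :
    q₁ ^ ε₁ * q₂ ^ ε₂ ∈ QG (10 * δ) τ := by
  obtain ⟨hδ0, hδ1⟩ := hδ
  have hτ0 : (0:ℝ) < τ := lt_of_lt_of_le one_pos hτ
  have h2d : (0:ℝ) < 2*δ := by linarith
  have h2d50 : 2*δ ≤ 1/50 := by linarith
  have hq₁' : q₁ ^ ε₁ ∈ QG (2*δ) τ := by
    rcases hε₁ with rfl|rfl
    · rw [zpow_one]; exact QG_mono hτ0 (by linarith) hq₁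
    · rw [zpow_neg_one]; exact QG_inv hδ0 (by linarith) hτ hq₁
  have hq₂' : q₂ ^ ε₂ ∈ QG (2*δ) τ := by
    rcases hε₂ with rfl|rfl
    · rw [zpow_one]; exact QG_mono hτ0 (by linarith) hq₂
    · rw [zpow_neg_one]; exact QG_inv hδ0 (by linarith) hτ hq₂
  exact QG_mono hτ0 (by linarith) (QG_mul h2d h2d50 h2d h2d50 hτ hq₁' hq₂')
end

section
/- Let δ ∈ (0, 1/100), t ≥ 0, and r ∈ [0, 2]. For every q ∈ Q_G(δ, e^t) ∪ Q_G(δ, e^t)^{-1} (where Q_G(δ, e^t)^{-1} denotes the set of inverses of elements of Q_G(δ, e^t)), one has q · a_t · u_r ∈ a_t · u_r · B_G(10δ); equivalently, ‖(a_t u_r)^{-1} · q · (a_t u_r) − I‖ ≤ 10δ. -/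
open scoped Pointwise

/-- The L∞ operator norm (maximum absolute row sum) of a 2×2 real matrix. -/
noncomputable def rowSumNorm (g : Matrix (Fin 2) (Fin 2) ℝ) : ℝ :=
  max (|g 0 0| + |g 0 1|) (|g 1 0| + |g 1 1|)

lemma inv_ta (t r : ℝ) : (diagA t * upU r)⁻¹ = upU (-r) * diagA (-t) := by
  refine (eq_inv_of_mul_eq_one_left ?_).symm
  apply Subtype.ext
  simp only [Matrix.SpecialLinearGroup.coe_mul]
  simp only [Matrix.SpecialLinearGroup.coe_mul, upU, diagA, Matrix.mul_fin_two,
    Matrix.SpecialLinearGroup.coe_one, Matrix.one_fin_two, neg_div]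
  ext i j
  fin_cases i <;> fin_cases j <;>
    simp [← Real.exp_add, mul_comm, mul_assoc, mul_left_comm]

lemma inv_q (s w v : ℝ) :
    (lowU s * diagA w * upU v)⁻¹ = upU (-v) * diagA (-w) * lowU (-s) := by
  refine (eq_inv_of_mul_eq_one_left ?_).symm
  apply Subtype.ext
  simp only [Matrix.SpecialLinearGroup.coe_mul]
  have hne2 : Real.exp (w/2) ≠ 0 := (Real.exp_pos _).ne'
  simp only [Matrix.SpecialLinearGroup.coe_mul, upU, lowU, diagA, Matrix.mul_fin_two,
    Matrix.SpecialLinearGroup.coe_one, Matrix.one_fin_two, neg_div, Real.exp_neg]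
  ext i j
  fin_cases i <;> fin_cases j <;> simp [Fin.zero_eta, Fin.mk_one] <;> field_simp <;> ring

lemma conj1 (t r s w v : ℝ) :
    ((upU (-r) * diagA (-t) * (lowU s * diagA w * upU v) * (diagA t * upU r) :
      Matrix.SpecialLinearGroup (Fin 2) ℝ) : Matrix (Fin 2) (Fin 2) ℝ) - 1 =
    !![Real.exp (w/2) - 1 - r*(s*Real.exp t)*Real.exp (w/2),
       r*(Real.exp (w/2) - Real.exp (-(w/2))) - r^2*(s*Real.exp t)*Real.exp (w/2)
         + Real.exp (-t)*v*Real.exp (w/2) - r*s*v*Real.exp (w/2);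
       (s*Real.exp t)*Real.exp (w/2),
       r*(s*Real.exp t)*Real.exp (w/2) + s*v*Real.exp (w/2) + Real.exp (-(w/2)) - 1] := by
  have e1 : Real.exp t = Real.exp (t/2) * Real.exp (t/2) := by
    rw [← Real.exp_add]; ring_nf
  have hne : Real.exp (t/2) ≠ 0 := (Real.exp_pos _).ne'
  have hne2 : Real.exp (w/2) ≠ 0 := (Real.exp_pos _).ne'
  simp only [Matrix.SpecialLinearGroup.coe_mul]
  ext i j
  fin_cases i <;> fin_cases j <;>
    · simp only [Matrix.SpecialLinearGroup.coe_mul, lowU, upU, diagA, Matrix.mul_fin_two,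
        Matrix.one_fin_two, e1, Real.exp_neg, neg_div, neg_neg, Matrix.sub_apply,
        Matrix.cons_val', Matrix.cons_val_zero, Matrix.cons_val_one, Matrix.head_cons,
        Matrix.head_fin_const, Matrix.empty_val', Matrix.cons_val_fin_one, Fin.isValue, Fin.zero_eta, Fin.mk_one, Matrix.of_apply]
      field_simp
      ring

lemma conj2 (t r s w v : ℝ) :
    ((upU (-r) * diagA (-t) * (upU (-v) * diagA (-w) * lowU (-s)) * (diagA t * upU r) :
      Matrix.SpecialLinearGroup (Fin 2) ℝ) : Matrix (Fin 2) (Fin 2) ℝ) - 1 =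
    !![Real.exp (-(w/2)) - 1 + s*v*Real.exp (w/2) + r*(s*Real.exp t)*Real.exp (w/2),
       r*(Real.exp (-(w/2)) - Real.exp (w/2)) + r*s*v*Real.exp (w/2)
         + r^2*(s*Real.exp t)*Real.exp (w/2) - Real.exp (-t)*v*Real.exp (w/2);
       -((s*Real.exp t)*Real.exp (w/2)),
       Real.exp (w/2) - 1 - r*(s*Real.exp t)*Real.exp (w/2)] := by
  have e1 : Real.exp t = Real.exp (t/2) * Real.exp (t/2) := by
    rw [← Real.exp_add]; ring_nf
  have hne : Real.exp (t/2) ≠ 0 := (Real.exp_pos _).ne'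
  have hne2 : Real.exp (w/2) ≠ 0 := (Real.exp_pos _).ne'
  simp only [Matrix.SpecialLinearGroup.coe_mul]
  ext i j
  fin_cases i <;> fin_cases j <;>
    · simp only [Matrix.SpecialLinearGroup.coe_mul, lowU, upU, diagA, Matrix.mul_fin_two,
        Matrix.one_fin_two, e1, Real.exp_neg, neg_div, neg_neg, Matrix.sub_apply,
        Matrix.cons_val', Matrix.cons_val_zero, Matrix.cons_val_one, Matrix.head_cons,
        Matrix.head_fin_const, Matrix.empty_val', Matrix.cons_val_fin_one, Fin.isValue, Fin.zero_eta, Fin.mk_one, Matrix.of_apply]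
      field_simp
      ring

lemma exp_near_one (x : ℝ) (hx : |x| ≤ 1/200) : |Real.exp x - 1| ≤ |x| * (200/199) := by
  rcases abs_le.mp hx with ⟨h1, h2⟩
  have hl := Real.add_one_le_exp x
  have hup := Real.add_one_le_exp (-x)
  rw [Real.exp_neg] at hup
  have hpos := Real.exp_pos x
  have hkey : (1 - x) * Real.exp x ≤ 1 := by
    rw [inv_eq_one_div, le_div_iff₀ hpos] at hup; linarith
  have hax : x ≤ |x| := le_abs_self x
  have hax2 : -x ≤ |x| := neg_le_abs x
  have hE : Real.exp x ≤ 200/199 := by nlinarith [abs_nonneg x]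
  rw [abs_le]
  constructor
  · nlinarith [abs_nonneg x]
  · nlinarith [abs_nonneg x]

lemma abs4 (a b c d : ℝ) : |a - b + c - d| ≤ |a| + |b| + |c| + |d| := by
  have h1 : |a - b + c - d| ≤ |a - b + c| + |d| := by
    simpa [sub_eq_add_neg] using abs_add_le (a - b + c) (-d)
  have h2 : |a - b + c| ≤ |a - b| + |c| := abs_add_le (a - b) c
  have h3 : |a - b| ≤ |a| + |b| := by
    simpa [sub_eq_add_neg] using abs_add_le a (-b)
  linarith

lemma monoBounds (δ r s v c d A B : ℝ) (hδ0 : 0 < δ) (hδ1 : δ ≤ 1/100)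
    (hr0 : 0 ≤ r) (hr2 : r ≤ 2) (hs : |s| ≤ δ) (hv : |v| ≤ δ) (hc : |c| ≤ δ)
    (hd : |d| ≤ 1) (hA1 : |A - 1| ≤ δ * (100/199)) (hB1 : |B - 1| ≤ δ * (100/199)) :
    |r*c*A| ≤ 2*δ*(200/199) ∧ |r^2*c*A| ≤ 4*δ*(200/199) ∧ |d*v*A| ≤ 1*δ*(200/199) ∧
    |r*s*v*A| ≤ 2*δ*δ*(200/199) ∧ |c*A| ≤ δ*(200/199) ∧ |s*v*A| ≤ δ*δ*(200/199) ∧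
    |r*(A-B)| ≤ 2*(δ*(200/199)) := by
  have hr : |r| ≤ 2 := abs_le.mpr ⟨by linarith, hr2⟩
  have hA : |A| ≤ 200/199 := by
    have h := abs_add_le (A - 1) 1
    rw [abs_one] at h
    have e : A - 1 + 1 = A := by ring
    rw [e] at h
    linarith
  have hAB : |A - B| ≤ δ*(200/199) := by
    have h := abs_add_le (A - 1) (-(B - 1))
    rw [show A - 1 + -(B - 1) = A - B from by ring, abs_neg] at h
    linarith
  have h2 : |r|^2 ≤ 4 := by nlinarith [abs_nonneg r]
  refine ⟨?_, ?_, ?_, ?_, ?_, ?_, ?_⟩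
  · rw [abs_mul, abs_mul]; gcongr
  · rw [abs_mul, abs_mul, abs_pow]; gcongr
  · rw [abs_mul, abs_mul]; gcongr
  · rw [abs_mul, abs_mul, abs_mul]; gcongr
  · rw [abs_mul]; gcongr
  · rw [abs_mul, abs_mul]; gcongr
  · rw [abs_mul]; gcongr

lemma bound1 (δ r s v c d A B : ℝ) (hδ0 : 0 < δ) (hδ1 : δ ≤ 1/100)
    (hr0 : 0 ≤ r) (hr2 : r ≤ 2) (hs : |s| ≤ δ) (hv : |v| ≤ δ) (hc : |c| ≤ δ)
    (hd : |d| ≤ 1) (hA1 : |A - 1| ≤ δ * (100/199)) (hB1 : |B - 1| ≤ δ * (100/199)) :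
    max (|A - 1 - r*c*A| + |r*(A-B) - r^2*c*A + d*v*A - r*s*v*A|)
        (|c*A| + |r*c*A + s*v*A + B - 1|) ≤ 10*δ := by
  obtain ⟨m3, m4, m5, m6, m7, m8, m9⟩ :=
    monoBounds δ r s v c d A B hδ0 hδ1 hr0 hr2 hs hv hc hd hA1 hB1
  have hδδ : δ*δ ≤ δ*(1/100) := by nlinarith
  apply max_le
  · have t1 : |A - 1 - r*c*A| ≤ |A - 1| + |r*c*A| := by
      simpa [sub_eq_add_neg] using abs_add_le (A-1) (-(r*c*A))
    have t2 := abs4 (r*(A-B)) (r^2*c*A) (d*v*A) (r*s*v*A)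
    nlinarith
  · have e : r*c*A + s*v*A + B - 1 = (r*c*A) + ((s*v*A) + (B-1)) := by ring
    have t1 : |r*c*A + s*v*A + B - 1| ≤ |r*c*A| + (|s*v*A| + |B - 1|) := by
      rw [e]
      exact (abs_add_le _ _).trans (by linarith [abs_add_le (s*v*A) (B-1)])
    nlinarith

lemma bound2 (δ r s v c d A B : ℝ) (hδ0 : 0 < δ) (hδ1 : δ ≤ 1/100)
    (hr0 : 0 ≤ r) (hr2 : r ≤ 2) (hs : |s| ≤ δ) (hv : |v| ≤ δ) (hc : |c| ≤ δ)
    (hd : |d| ≤ 1) (hA1 : |A - 1| ≤ δ * (100/199)) (hB1 : |B - 1| ≤ δ * (100/199)) :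
    max (|B - 1 + s*v*A + r*c*A| + |r*(B-A) + r*s*v*A + r^2*c*A - d*v*A|)
        (|-(c*A)| + |A - 1 - r*c*A|) ≤ 10*δ := by
  obtain ⟨m3, m4, m5, m6, m7, m8, m9⟩ :=
    monoBounds δ r s v c d A B hδ0 hδ1 hr0 hr2 hs hv hc hd hA1 hB1
  have m9' : |r*(B-A)| ≤ 2*(δ*(200/199)) := by
    have e : r*(B-A) = -(r*(A-B)) := by ring
    rw [e, abs_neg]; exact m9
  have hδδ : δ*δ ≤ δ*(1/100) := by nlinarith
  apply max_le
  · have e : B - 1 + s*v*A + r*c*A = (B-1) + ((s*v*A) + (r*c*A)) := by ring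
    have t1 : |B - 1 + s*v*A + r*c*A| ≤ |B-1| + (|s*v*A| + |r*c*A|) := by
      rw [e]
      exact (abs_add_le _ _).trans (by linarith [abs_add_le (s*v*A) (r*c*A)])
    have e2 : r*(B-A) + r*s*v*A + r^2*c*A - d*v*A
        = (r*(B-A)) - (-(r*s*v*A)) + (r^2*c*A) - (d*v*A) := by ring
    have t2 : |r*(B-A) + r*s*v*A + r^2*c*A - d*v*A|
        ≤ |r*(B-A)| + |r*s*v*A| + |r^2*c*A| + |d*v*A| := by
      rw [e2]
      have h := abs4 (r*(B-A)) (-(r*s*v*A)) (r^2*c*A) (d*v*A)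
      rw [abs_neg] at h
      exact h
    nlinarith
  · have t1 : |A - 1 - r*c*A| ≤ |A - 1| + |r*c*A| := by
      simpa [sub_eq_add_neg] using abs_add_le (A-1) (-(r*c*A))
    rw [abs_neg]
    nlinarith

lemma rowSumNorm_fin_two (a b c d : ℝ) :
    rowSumNorm !![a, b; c, d] = max (|a| + |b|) (|c| + |d|) := by
  simp [rowSumNorm]

/-- For `q ∈ Q_G(δ, e^t) ∪ Q_G(δ, e^t)⁻¹`, one has
`‖(a_t u_r)⁻¹ q (a_t u_r) − I‖ ≤ 10δ`, i.e. `q ⬝ a_t u_r ∈ a_t u_r ⬝ B_G(10δ)`. -/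
theorem QG_conj_small (δ t r : ℝ) (hδ : δ ∈ Set.Ioo (0 : ℝ) (1 / 100)) (ht : 0 ≤ t)
    (hr : r ∈ Set.Icc (0 : ℝ) 2)
    (q : Matrix.SpecialLinearGroup (Fin 2) ℝ)
    (hq : q ∈ QG δ (Real.exp t) ∪ (QG δ (Real.exp t))⁻¹) :
    rowSumNorm ((((diagA t * upU r)⁻¹ * q * (diagA t * upU r) :
      Matrix.SpecialLinearGroup (Fin 2) ℝ) : Matrix (Fin 2) (Fin 2) ℝ) - 1) ≤ 10 * δ := by
  obtain ⟨hδ0, hδ1⟩ := hδ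
  obtain ⟨hr0, hr2⟩ := hr
  have hδ1' : δ ≤ 1/100 := le_of_lt hδ1
  have het : (0:ℝ) < Real.exp t := Real.exp_pos t
  have het1 : (1:ℝ) ≤ Real.exp t := Real.one_le_exp ht
  have hd : |Real.exp (-t)| ≤ 1 := by
    rw [abs_of_pos (Real.exp_pos _)]
    exact Real.exp_le_one_iff.mpr (by linarith)
  -- extract the parameters
  have main : ∀ s w v : ℝ, |s| ≤ δ / Real.exp t → |w| ≤ δ → |v| ≤ δ →
      (|s * Real.exp t| ≤ δ ∧ |s| ≤ δ ∧
        |Real.exp (w/2) - 1| ≤ δ * (100/199) ∧ |Real.exp (-(w/2)) - 1| ≤ δ * (100/199)) := by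
    intro s w v hs hw hv
    have hc : |s * Real.exp t| ≤ δ := by
      rw [abs_mul, abs_of_pos het]
      calc |s| * Real.exp t ≤ (δ / Real.exp t) * Real.exp t := by gcongr
        _ = δ := by field_simp
    have hs' : |s| ≤ δ := le_trans hs (by
      rw [div_le_iff₀ het]; nlinarith [abs_nonneg s])
    have hw2 : |w/2| ≤ 1/200 := by
      rw [abs_div, abs_two]
      rw [div_le_div_iff₀ (by norm_num) (by norm_num)]
      have := abs_nonneg w
      nlinarith
    have hw2' : |-(w/2)| ≤ 1/200 := by rwa [abs_neg]
    have hA1 : |Real.exp (w/2) - 1| ≤ δ * (100/199) := by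
      have h := exp_near_one (w/2) hw2
      have : |w/2| * (200/199) ≤ δ * (100/199) := by
        rw [abs_div, abs_two]
        have : |w| ≤ δ := hw
        nlinarith [abs_nonneg w]
      linarith
    have hB1 : |Real.exp (-(w/2)) - 1| ≤ δ * (100/199) := by
      have h := exp_near_one (-(w/2)) hw2'
      have : |-(w/2)| * (200/199) ≤ δ * (100/199) := by
        rw [abs_neg, abs_div, abs_two]
        nlinarith [abs_nonneg w, hw]
      linarith
    exact ⟨hc, hs', hA1, hB1⟩
  rcases hq with hq | hq
  · obtain ⟨s, w, v, hs, hw, hv, hqe⟩ := hq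
    obtain ⟨hc, hs', hA1, hB1⟩ := main s w v hs hw hv
    rw [hqe, inv_ta, conj1, rowSumNorm_fin_two]
    exact bound1 δ r s v (s*Real.exp t) (Real.exp (-t)) (Real.exp (w/2)) (Real.exp (-(w/2)))
      hδ0 hδ1' hr0 hr2 hs' hv hc hd hA1 hB1
  · rw [Set.mem_inv] at hq
    obtain ⟨s, w, v, hs, hw, hv, hqe⟩ := hq
    obtain ⟨hc, hs', hA1, hB1⟩ := main s w v hs hw hv
    have hq2 : q = upU (-v) * diagA (-w) * lowU (-s) := by
      rw [← inv_q s w v, ← hqe, inv_inv]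
    rw [hq2, inv_ta, conj2, rowSumNorm_fin_two]
    exact bound2 δ r s v (s*Real.exp t) (Real.exp (-t)) (Real.exp (w/2)) (Real.exp (-(w/2)))
      hδ0 hδ1' hr0 hr2 hs' hv hc hd hA1 hB1
end

section
/- Let G be a topological group equipped with a Borel measure μ that is invariant under right translations (μ(E·g) = μ(E) for all Borel E and g ∈ G). Let Γ be a subgroup of G, let B ⊆ G be any subset, let W ⊆ G be a Borel measurable set, and let Δ be a finite subset of Γ ∩ B such that the right translates {W·δ : δ ∈ Δ} are pairwise disjoint. Then μ(W)·|Δ|² ≤ ∫⁻_{g ∈ G} 1_{W·B}(g) · #(Γ ∩ g^{-1}·(W·B)) dμ(g), where W·B = {w·b : w ∈ W, b ∈ B}, #(·) ∈ [0, ∞] denotes extended cardinality, and ∫⁻ is the lower Lebesgue integral of a nonnegative extended-real-valued function. -/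
open MeasureTheory
open scoped Pointwise ENNReal

/-- The unfolding counting inequality: if the right translates `W·δ`, `δ ∈ Δ`,
are pairwise disjoint, then
`μ(W)·|Δ|² ≤ ∫⁻_g 1_{W·B}(g) · #(Γ ∩ g⁻¹·(W·B)) dμ(g)`. -/
theorem counting_unfolding {G : Type*} [Group G] [TopologicalSpace G] [IsTopologicalGroup G]
    [MeasurableSpace G] [BorelSpace G]
    (μ : Measure G) [μ.IsMulRightInvariant]
    (Γ : Subgroup G) (B W : Set G) (hW : MeasurableSet W)
    (Δ : Finset G) (hΔ : (Δ : Set G) ⊆ (Γ : Set G) ∩ B)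
    (hdisj : ∀ δ₁ ∈ Δ, ∀ δ₂ ∈ Δ, δ₁ ≠ δ₂ →
      Disjoint (W * ({δ₁} : Set G)) (W * ({δ₂} : Set G))) :
    μ W * (Δ.card : ℝ≥0∞) ^ 2 ≤
      ∫⁻ g, (W * B).indicator
        (fun g => (((Γ : Set G) ∩ (g⁻¹ • (W * B))).encard : ℝ≥0∞)) g ∂μ := by
  classical
  set S : Set G := ⋃ δ ∈ Δ, W * ({δ} : Set G) with hS
  have hWδ_meas : ∀ δ : G, MeasurableSet (W * ({δ} : Set G)) := by
    intro δ
    rw [Set.mul_singleton]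
    exact (Homeomorph.mulRight δ).measurableEmbedding.measurableSet_image.2 hW
  have hWδ_measure : ∀ δ : G, μ (W * ({δ} : Set G)) = μ W := by
    intro δ
    have : W * ({δ} : Set G) = (· * δ⁻¹) ⁻¹' W := by
      ext x
      simp [Set.mul_singleton, eq_comm, mul_inv_eq_iff_eq_mul]
    rw [this, measure_preimage_mul_right]
  have hS_meas : MeasurableSet S :=
    Finset.measurableSet_biUnion Δ fun δ _ => hWδ_meas δ
  have hμS : μ S = (Δ.card : ℝ≥0∞) * μ W := by
    rw [hS, measure_biUnion_finset ?_ (fun δ _ => hWδ_meas δ)]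
    · simp [hWδ_measure, Finset.sum_const, nsmul_eq_mul]
    · intro δ₁ h₁ δ₂ h₂ hne
      exact hdisj δ₁ h₁ δ₂ h₂ hne
  -- pointwise bound
  have hpt : S.indicator (fun _ => (Δ.card : ℝ≥0∞)) ≤
      (W * B).indicator
        (fun g => (((Γ : Set G) ∩ (g⁻¹ • (W * B))).encard : ℝ≥0∞)) := by
    intro g
    by_cases hg : g ∈ S
    · have hg' := hg
      rw [hS, Set.mem_iUnion₂] at hg'
      obtain ⟨δ, hδΔ, hgWδ⟩ := hg'
      obtain ⟨w, hw, d, hd, rfl⟩ := hgWδ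
      obtain rfl : d = δ := hd
      have hdB : d ∈ B := (hΔ hδΔ).2
      have hdΓ : d ∈ (Γ : Set G) := (hΔ hδΔ).1
      have hgWB : w * d ∈ W * B := Set.mul_mem_mul hw hdB
      rw [Set.indicator_of_mem hg, Set.indicator_of_mem hgWB]
      have hsub : (d⁻¹ * ·) '' (Δ : Set G) ⊆
          (Γ : Set G) ∩ ((w * d)⁻¹ • (W * B)) := by
        rintro x ⟨δ', hδ', rfl⟩
        refine ⟨?_, ?_⟩
        · exact Subgroup.mul_mem Γ (Subgroup.inv_mem Γ hdΓ) ((hΔ hδ').1)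
        · rw [Set.mem_inv_smul_set_iff, smul_eq_mul]
          have : w * d * (d⁻¹ * δ') = w * δ' := by group
          rw [this]
          exact Set.mul_mem_mul hw ((hΔ hδ').2)
      have h1 : ((d⁻¹ * ·) '' (Δ : Set G)).encard = (Δ.card : ℕ∞) := by
        rw [Function.Injective.encard_image (mul_right_injective d⁻¹),
          Set.encard_coe_eq_coe_finsetCard]
      have h2 : ((d⁻¹ * ·) '' (Δ : Set G)).encard ≤
          ((Γ : Set G) ∩ ((w * d)⁻¹ • (W * B))).encard := Set.encard_mono hsub
      rw [h1] at h2
      calc (Δ.card : ℝ≥0∞) = ((Δ.card : ℕ∞) : ℝ≥0∞) := by simp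
        _ ≤ _ := ENat.toENNReal_le.2 h2
    · rw [Set.indicator_of_notMem hg]
      exact zero_le
  calc μ W * (Δ.card : ℝ≥0∞) ^ 2
      = (Δ.card : ℝ≥0∞) * ((Δ.card : ℝ≥0∞) * μ W) := by ring
    _ = ∫⁻ g, S.indicator (fun _ => (Δ.card : ℝ≥0∞)) g ∂μ := by
        rw [lintegral_indicator_const hS_meas, hμS]
    _ ≤ _ := lintegral_mono hpt
end

section
/- For every positive integer n there exist constants C > 0 and κ > 0 with the following property: for every g ∈ GL_n(ℤ) such that the complex matrix obtained from g by casting its entries into ℂ has an eigenvalue λ with |λ| ≠ 1, and for every real T ≥ 2, the number of integers k ∈ ℤ with ‖g^k‖ ≤ T is at most C·(log T)^κ. Here ‖·‖ denotes the maximum of the absolute values of the matrix entries, and g^k denotes the k-th power of g in the group GL_n(ℤ) (so negative powers are allowed). -/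
open scoped MatrixGroups

open Polynomial Matrix
namespace HypAux



variable {n : ℕ}

lemma multiset_prod_le_one {s : Multiset ℝ} (h0 : ∀ x ∈ s, 0 ≤ x) (h1 : ∀ x ∈ s, x ≤ 1) :
    s.prod ≤ 1 := by
  induction s using Multiset.induction with
  | empty => simp
  | cons a s ih =>
    rw [Multiset.prod_cons]
    have ha0 := h0 a (Multiset.mem_cons_self a s)
    have ha1 := h1 a (Multiset.mem_cons_self a s)
    have hs : s.prod ≤ 1 := ih (fun x hx => h0 x (Multiset.mem_cons_of_mem hx))
      (fun x hx => h1 x (Multiset.mem_cons_of_mem hx))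
    have hs0 : 0 ≤ s.prod :=
      Multiset.prod_nonneg (fun x hx => h0 x (Multiset.mem_cons_of_mem hx))
    nlinarith

lemma charpoly_eval (M : Matrix (Fin n) (Fin n) ℂ) (μ : ℂ) :
    M.charpoly.eval μ = (μ • (1 : Matrix (Fin n) (Fin n) ℂ) - M).det := by
  rw [Matrix.charpoly, _root_.eval_det, matPolyEquiv_charmatrix]
  rw [Polynomial.eval_sub, Polynomial.eval_X, Polynomial.eval_C]
  congr 1
  ext i j
  simp [Matrix.scalar, Matrix.smul_apply, Matrix.one_apply, Matrix.diagonal_apply]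

lemma root_iff_eigen (M : Matrix (Fin n) (Fin n) ℂ) (μ : ℂ) :
    M.charpoly.eval μ = 0 ↔ ∃ v : Fin n → ℂ, v ≠ 0 ∧ M *ᵥ v = μ • v := by
  rw [charpoly_eval]
  rw [← Matrix.exists_mulVec_eq_zero_iff]
  constructor
  · rintro ⟨v, hv, hmv⟩
    refine ⟨v, hv, ?_⟩
    rw [Matrix.sub_mulVec, Matrix.smul_mulVec, Matrix.one_mulVec, sub_eq_zero] at hmv
    exact hmv.symm
  · rintro ⟨v, hv, hmv⟩
    refine ⟨v, hv, ?_⟩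
    rw [Matrix.sub_mulVec, Matrix.smul_mulVec, Matrix.one_mulVec, sub_eq_zero, hmv]

lemma eigen_abs_le (hn : 0 < n) {M : Matrix (Fin n) (Fin n) ℂ} {v : Fin n → ℂ} {μ : ℂ} {R : ℝ}
    (hv : v ≠ 0) (hMv : M *ᵥ v = μ • v) (hR : ∀ i j, ‖M i j‖ ≤ R) :
    ‖μ‖ ≤ n * R := by
  obtain ⟨i, -, hi⟩ := Finset.exists_max_image Finset.univ (fun i => ‖v i‖)
    ⟨⟨0, hn⟩, Finset.mem_univ _⟩
  have hipos : 0 < ‖v i‖ := by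
    rcases Function.ne_iff.mp hv with ⟨j, hj⟩
    exact lt_of_lt_of_le (norm_pos_iff.mpr hj) (hi j (Finset.mem_univ j))
  have hR0 : 0 ≤ R := le_trans (norm_nonneg _) (hR i i)
  have h1 : ‖μ‖ * ‖v i‖ = ‖(M *ᵥ v) i‖ := by
    rw [hMv]; simp
  have h2 : ‖(M *ᵥ v) i‖ ≤ (n * R) * ‖v i‖ := by
    have : (M *ᵥ v) i = ∑ j, M i j * v j := by
      simp [Matrix.mulVec, dotProduct]
    rw [this]
    calc ‖∑ j, M i j * v j‖ ≤ ∑ j, ‖M i j * v j‖ :=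
          norm_sum_le _ _
      _ ≤ ∑ _j : Fin n, R * ‖v i‖ := by
          apply Finset.sum_le_sum
          intro j _
          rw [norm_mul]
          exact mul_le_mul (hR i j) (hi j (Finset.mem_univ j)) (norm_nonneg _) hR0
      _ = (n * R) * ‖v i‖ := by
          rw [Finset.sum_const, Finset.card_univ, Fintype.card_fin, nsmul_eq_mul]; ring
  have := h1.trans_le h2
  exact le_of_mul_le_mul_right (by linarith) hipos

lemma zpow_eigen (u : (Matrix (Fin n) (Fin n) ℂ)ˣ) {w : Fin n → ℂ} {μ : ℂ} (hμ : μ ≠ 0)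
    (hw : (u : Matrix (Fin n) (Fin n) ℂ) *ᵥ w = μ • w) (k : ℤ) :
    ((u ^ k : (Matrix (Fin n) (Fin n) ℂ)ˣ) : Matrix (Fin n) (Fin n) ℂ) *ᵥ w = μ ^ k • w := by
  have hnat : ∀ m : ℕ, ((u ^ m : (Matrix (Fin n) (Fin n) ℂ)ˣ) : Matrix (Fin n) (Fin n) ℂ) *ᵥ w
      = μ ^ m • w := by
    intro m
    induction m with
    | zero => simp
    | succ m ih =>
      rw [pow_succ, Units.val_mul, ← Matrix.mulVec_mulVec, hw, Matrix.mulVec_smul, ih,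
        smul_smul, pow_succ]
      rw [mul_comm]
  rcases le_or_gt 0 k with hk | hk
  · lift k to ℕ using hk
    rw [zpow_natCast, zpow_natCast]
    exact hnat k
  · obtain ⟨m, rfl⟩ : ∃ m : ℕ, k = -(m : ℤ) := ⟨k.natAbs, by omega⟩
    have h1 := hnat m
    have h2 : ((u ^ (-(m : ℤ)) : (Matrix (Fin n) (Fin n) ℂ)ˣ) : Matrix (Fin n) (Fin n) ℂ) *ᵥ
        (μ ^ m • w) = w := by
      rw [← h1, Matrix.mulVec_mulVec, ← Units.val_mul, _root_.zpow_neg, zpow_natCast, inv_mul_cancel,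
        Units.val_one, Matrix.one_mulVec]
    rw [Matrix.mulVec_smul] at h2
    have hμm : (μ : ℂ) ^ m ≠ 0 := pow_ne_zero _ hμ
    have h3 : ((u ^ (-(m : ℤ)) : (Matrix (Fin n) (Fin n) ℂ)ˣ) : Matrix (Fin n) (Fin n) ℂ) *ᵥ w
        = (μ ^ m)⁻¹ • w := by
      have h4 := congrArg (fun x => (μ ^ m)⁻¹ • x) h2
      simpa [smul_smul, inv_mul_cancel₀ hμm] using h4
    rw [h3, _root_.zpow_neg, zpow_natCast]




variable {n : ℕ}

lemma det_abs_one (u : (Matrix (Fin n) (Fin n) ℤ)ˣ) :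
    |((u : Matrix (Fin n) (Fin n) ℤ)).det| = 1 := by
  have hdet : ((u : Matrix (Fin n) (Fin n) ℤ)).det *
      ((↑u⁻¹ : Matrix (Fin n) (Fin n) ℤ)).det = 1 := by
    rw [← Matrix.det_mul, ← Units.val_mul, mul_inv_cancel, Units.val_one, Matrix.det_one]
  rcases Int.isUnit_iff.mp (IsUnit.of_mul_eq_one _ hdet) with h | h <;> rw [h] <;> rfl

lemma inv_entry_bound (u : (Matrix (Fin n) (Fin n) ℤ)ˣ) {T : ℝ} (hT : 1 ≤ T)
    (h : ∀ i j, (|(u : Matrix (Fin n) (Fin n) ℤ) i j| : ℝ) ≤ T) (i j : Fin n) :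
    (|(↑u⁻¹ : Matrix (Fin n) (Fin n) ℤ) i j| : ℝ) ≤ (n.factorial : ℝ) * T ^ n := by
  set B : Matrix (Fin n) (Fin n) ℤ := (u : Matrix (Fin n) (Fin n) ℤ)
  have hadj : adjugate B = B.det • (↑u⁻¹ : Matrix (Fin n) (Fin n) ℤ) := by
    calc adjugate B = adjugate B * (B * (↑u⁻¹ : Matrix (Fin n) (Fin n) ℤ)) := by
          rw [← Units.val_mul, mul_inv_cancel, Units.val_one, mul_one]
      _ = (adjugate B * B) * (↑u⁻¹ : Matrix (Fin n) (Fin n) ℤ) := by rw [mul_assoc]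
      _ = B.det • (↑u⁻¹ : Matrix (Fin n) (Fin n) ℤ) := by
          rw [Matrix.adjugate_mul, Matrix.smul_mul, Matrix.one_mul]
  have hentry : |adjugate B i j| = |(↑u⁻¹ : Matrix (Fin n) (Fin n) ℤ) i j| := by
    have : adjugate B i j = B.det * (↑u⁻¹ : Matrix (Fin n) (Fin n) ℤ) i j := by
      rw [hadj]; simp [Matrix.smul_apply]
    rw [this, abs_mul, det_abs_one u, one_mul]
  rw [← Int.cast_abs, ← hentry, Int.cast_abs]
  -- now bound the adjugate entry over ℝ
  set Bc : Matrix (Fin n) (Fin n) ℝ := B.map ((↑) : ℤ → ℝ)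
  have hmapadj : adjugate Bc = (adjugate B).map ((↑) : ℤ → ℝ) := by
    simpa [RingHom.mapMatrix_apply] using (RingHom.map_adjugate (Int.castRingHom ℝ) B).symm
  have hcast : |((adjugate B i j : ℤ) : ℝ)| = |adjugate Bc i j| := by
    rw [hmapadj]
    simp [Matrix.map_apply]
  rw [hcast, Matrix.adjugate_apply]
  have hb : ∀ a b : Fin n, |(Bc.updateRow j (Pi.single i 1)) a b| ≤ T := by
    intro a b
    rcases eq_or_ne a j with rfl | hne
    · rw [Matrix.updateRow_self]
      rcases eq_or_ne b i with rfl | hbi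
      · simp only [Pi.single_apply, if_true, eq_self_iff_true, abs_one]
        simpa using hT
      · simp only [Pi.single_apply, hbi.symm, if_false]
        simp [hbi]
        linarith
    · rw [Matrix.updateRow_ne hne]
      exact h a b
  have := Matrix.det_le (A := Bc.updateRow j (Pi.single i 1)) (abv := AbsoluteValue.abs) hb
  simpa [Fintype.card_fin, nsmul_eq_mul] using this




lemma exists_gap (n : ℕ) (hn : 0 < n) :
    ∃ δ : ℝ, 1 < δ ∧ ∀ (f : Polynomial ℤ) (z : ℂ), f.Monic → f.natDegree = n →
      Polynomial.aeval z f = 0 →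
      (∀ w ∈ (f.map (Int.castRingHom ℂ)).roots, ‖w‖ ≤ 2) →
      1 < ‖z‖ → δ ≤ ‖z‖ := by
  classical
  set Bint : ℤ := 2 ^ n * (n.choose (n / 2)) with hBint
  have hUfin : (Set.Icc (-Bint) Bint).Finite := Set.finite_Icc _ _
  have hWfin : (⋃ (f : Polynomial ℤ)
      (_ : f.natDegree ≤ n ∧ ∀ i, f.coeff i ∈ Set.Icc (-Bint) Bint),
      (((f.map (Int.castRingHom ℂ)).roots.toFinset : Finset ℂ) : Set ℂ)).Finite :=
    Polynomial.bUnion_roots_finite (Int.castRingHom ℂ) n hUfin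
  set W := (⋃ (f : Polynomial ℤ)
      (_ : f.natDegree ≤ n ∧ ∀ i, f.coeff i ∈ Set.Icc (-Bint) Bint),
      (((f.map (Int.castRingHom ℂ)).roots.toFinset : Finset ℂ) : Set ℂ)) with hW
  have hWgtfin : {z ∈ W | 1 < ‖z‖}.Finite :=
    hWfin.subset (Set.sep_subset _ _)
  set F : Finset ℝ := hWgtfin.toFinset.image (‖·‖) with hF
  have hmem : ∀ (f : Polynomial ℤ) (z : ℂ), f.Monic → f.natDegree = n →
      Polynomial.aeval z f = 0 →
      (∀ w ∈ (f.map (Int.castRingHom ℂ)).roots, ‖w‖ ≤ 2) →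
      1 < ‖z‖ → ‖z‖ ∈ F := by
    intro f z hmon hdeg haev hroots hz1
    have hsp : Splits (f.map (Int.castRingHom ℂ)) :=
      IsAlgClosed.splits _
    have hcoeff : ∀ i, f.coeff i ∈ Set.Icc (-Bint) Bint := by
      intro i
      have hb := Polynomial.coeff_bdd_of_roots_le (B := 2) (d := n) (Int.castRingHom ℂ)
        hmon hsp (le_of_eq hdeg) (by
          intro w hw
          exact hroots w hw) i
      rw [Polynomial.coeff_map] at hb
      have h2 : max (2 : ℝ) 1 = 2 := by norm_num
      rw [h2] at hb
      have hb2 : ((|f.coeff i| : ℤ) : ℝ) ≤ ((Bint : ℤ) : ℝ) := by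
        calc ((|f.coeff i| : ℤ) : ℝ) = ‖((f.coeff i : ℤ) : ℂ)‖ := by
              rw [Complex.norm_intCast, Int.cast_abs]
          _ ≤ 2 ^ n * ((n.choose (n / 2) : ℕ) : ℝ) := hb
          _ = ((Bint : ℤ) : ℝ) := by rw [hBint]; push_cast; ring
      have habs : |f.coeff i| ≤ Bint := (@Int.cast_le ℝ _ _ _).mp hb2
      rw [Set.mem_Icc]
      constructor
      · linarith [neg_abs_le (f.coeff i)]
      · linarith [le_abs_self (f.coeff i)]
    have hzW : z ∈ W := by
      rw [hW]
      refine Set.mem_iUnion₂.mpr ⟨f, ⟨le_of_eq hdeg, hcoeff⟩, ?_⟩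
      simp only [Finset.coe_sort_coe, Finset.mem_coe, Multiset.mem_toFinset]
      rw [Polynomial.mem_roots']
      refine ⟨(hmon.map (Int.castRingHom ℂ)).ne_zero, ?_⟩
      rw [Polynomial.IsRoot, Polynomial.eval_map]
      rw [Polynomial.aeval_def] at haev
      exact haev
    exact Finset.mem_image.mpr ⟨z, hWgtfin.mem_toFinset.mpr ⟨hzW, hz1⟩, rfl⟩
  by_cases hFne : F.Nonempty
  · refine ⟨F.min' hFne, ?_, ?_⟩
    · rw [Finset.lt_min'_iff]
      intro y hy
      obtain ⟨z, hz, rfl⟩ := Finset.mem_image.mp hy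
      exact (hWgtfin.mem_toFinset.mp hz).2
    · intro f z h1 h2 h3 h4 h5
      exact F.min'_le _ (hmem f z h1 h2 h3 h4 h5)
  · refine ⟨2, one_lt_two, ?_⟩
    intro f z h1 h2 h3 h4 h5
    exact absurd ⟨_, hmem f z h1 h2 h3 h4 h5⟩ hFne


end HypAux

open HypAux

set_option maxHeartbeats 1000000 in
/-- Logarithmic growth of powers of a hyperbolic integer matrix: if `g ∈ GL_n(ℤ)`
has a complex eigenvalue of modulus `≠ 1`, then for `T ≥ 2` the number of `k ∈ ℤ`
with `‖g^k‖ ≤ T` is at most `C·(log T)^κ`. -/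
theorem hyperbolic_power_count (n : ℕ) (hn : 0 < n) :
    ∃ C > (0 : ℝ), ∃ κ > (0 : ℝ),
      ∀ g : GL (Fin n) ℤ,
        (∃ (lam : ℂ) (v : Fin n → ℂ), v ≠ 0 ∧
            ((g : Matrix (Fin n) (Fin n) ℤ).map (Int.cast : ℤ → ℂ)).mulVec v = lam • v ∧
            ‖lam‖ ≠ 1) →
        ∀ T : ℝ, 2 ≤ T →
          {k : ℤ | ∀ i j,
              (|((g ^ k : GL (Fin n) ℤ) : Matrix (Fin n) (Fin n) ℤ) i j| : ℝ) ≤ T}.Finite ∧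
          (({k : ℤ | ∀ i j,
              (|((g ^ k : GL (Fin n) ℤ) : Matrix (Fin n) (Fin n) ℤ) i j| : ℝ) ≤ T}.ncard : ℝ)
            ≤ C * Real.log T ^ κ) := by
  classical
  obtain ⟨δ0, hδ0, hgap⟩ := exists_gap n hn
  set δ : ℝ := min δ0 2 with hδdef
  have hδ : 1 < δ := lt_min hδ0 one_lt_two
  set ε : ℝ := Real.log δ with hεdef
  have hεpos : 0 < ε := Real.log_pos hδ
  have hlog2 : (0 : ℝ) < Real.log 2 := Real.log_pos one_lt_two
  set Mn : ℝ := Real.log ((n : ℝ) * (n.factorial : ℝ)) / Real.log 2 + n with hMndef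
  have hnn1 : (1 : ℝ) ≤ (n : ℝ) := by exact_mod_cast hn
  have hfac1 : (1 : ℝ) ≤ (n.factorial : ℝ) := by exact_mod_cast n.factorial_pos
  have hlognn : (0 : ℝ) ≤ Real.log ((n : ℝ) * (n.factorial : ℝ)) :=
    Real.log_nonneg (by nlinarith)
  have hMn0 : 0 < Mn := by
    have : (0 : ℝ) ≤ Real.log ((n : ℝ) * (n.factorial : ℝ)) / Real.log 2 :=
      div_nonneg hlognn hlog2.le
    rw [hMndef]; linarith
  refine ⟨2 * Mn / ε + 3 / Real.log 2, by positivity, 1, one_pos, ?_⟩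
  rintro g ⟨lam, v, hv0, hmul, habs1⟩ T hT
  have hT1 : (1 : ℝ) ≤ T := by linarith
  have hTpos : (0 : ℝ) < T := by linarith
  have hlogT2 : Real.log 2 ≤ Real.log T := Real.log_le_log two_pos hT
  have hlogT0 : 0 ≤ Real.log T := hlog2.le.trans hlogT2
  set A : Matrix (Fin n) (Fin n) ℂ :=
    (g : Matrix (Fin n) (Fin n) ℤ).map (Int.cast : ℤ → ℂ) with hA
  set f : Polynomial ℤ := (g : Matrix (Fin n) (Fin n) ℤ).charpoly with hf
  have hfc : A.charpoly = f.map (Int.castRingHom ℂ) := by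
    rw [hA, hf, ← Matrix.charpoly_map]
    rfl
  set fc : Polynomial ℂ := A.charpoly with hfcdef
  have hsp : fc.Splits := IsAlgClosed.splits fc
  have hmonic : fc.Monic := A.charpoly_monic
  have hdeg : fc.natDegree = n := by
    rw [hfcdef, Matrix.charpoly_natDegree_eq_dim, Fintype.card_fin]
  set R : Multiset ℂ := fc.roots with hR
  have hcard : R.card = n := by
    rw [hR, Polynomial.splits_iff_card_roots.mp hsp]
    exact hdeg
  -- product of absolute values of roots is 1
  have hfac : fc = (R.map fun a => X - C a).prod :=
    hsp.eq_prod_roots_of_monic hmonic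
  have he0 : ‖fc.eval 0‖ = (R.map (‖·‖)).prod := by
    conv_lhs => rw [hfac]
    rw [Polynomial.eval_multiset_prod, Multiset.map_map, (map_multiset_prod (normHom : ℂ →*₀ ℝ) _ : ‖_‖ = (Multiset.map (fun x => ‖x‖) _).prod), Multiset.map_map]
    congr 1
    apply Multiset.map_congr rfl
    intro a _
    simp
  have hdetu : |(g : Matrix (Fin n) (Fin n) ℤ).det| = 1 := det_abs_one g
  have hcoeff0 : |f.coeff 0| = 1 := by
    rw [Matrix.det_eq_sign_charpoly_coeff, ← hf] at hdetu
    rwa [abs_mul, abs_pow, abs_neg, abs_one, one_pow, one_mul] at hdetu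
  have hc0 : fc.eval 0 = ((f.coeff 0 : ℤ) : ℂ) := by
    rw [← Polynomial.coeff_zero_eq_eval_zero, hfc, Polynomial.coeff_map]
    rfl
  have hprod : (R.map (‖·‖)).prod = 1 := by
    rw [← he0, hc0, Complex.norm_intCast, ← Int.cast_abs, hcoeff0, Int.cast_one]
  -- lam is a root
  have hlameval : fc.eval lam = 0 := (root_iff_eigen A lam).mpr ⟨v, hv0, hmul⟩
  have hlamroot : lam ∈ R := by
    rw [hR, Polynomial.mem_roots']
    exact ⟨hmonic.ne_zero, hlameval⟩
  -- there is a root of modulus > 1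
  have hbig : ∃ z ∈ R, 1 < ‖z‖ := by
    rcases lt_or_gt_of_ne habs1 with hlt | hgt
    · by_contra hcon
      push_neg at hcon
      set R' : Multiset ℂ := R.erase lam with hR'
      have hcons : R = lam ::ₘ R' := (Multiset.cons_erase hlamroot).symm
      have h1 : (R.map (‖·‖)).prod
          = ‖lam‖ * (R'.map (‖·‖)).prod := by
        conv_lhs => rw [hcons]
        rw [Multiset.map_cons, Multiset.prod_cons]
      have h0' : ∀ x ∈ R'.map (‖·‖), (0:ℝ) ≤ x := by
        intro x hx
        obtain ⟨z, hz, rfl⟩ := Multiset.mem_map.mp hx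
        exact norm_nonneg _
      have h2 : (R'.map (‖·‖)).prod ≤ 1 := by
        apply multiset_prod_le_one h0'
        intro x hx
        obtain ⟨z, hz, rfl⟩ := Multiset.mem_map.mp hx
        exact hcon z (Multiset.mem_of_mem_erase hz)
      have h3 : 0 ≤ (R'.map (‖·‖)).prod := Multiset.prod_nonneg h0'
      rw [h1] at hprod
      nlinarith [norm_nonneg lam]
    · exact ⟨lam, hlamroot, hgt⟩
  -- maximal modulus root
  have hRne : R.toFinset.Nonempty := by
    rw [Multiset.toFinset_nonempty]
    intro h0
    rw [h0] at hcard
    simp at hcard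
    omega
  obtain ⟨μ, hμF, hμmax⟩ := Finset.exists_max_image R.toFinset (fun z => ‖z‖) hRne
  have hμR : μ ∈ R := Multiset.mem_toFinset.mp hμF
  obtain ⟨μ0, hμ0R, hμ0big⟩ := hbig
  have hμ1 : 1 < ‖μ‖ :=
    lt_of_lt_of_le hμ0big (hμmax μ0 (Multiset.mem_toFinset.mpr hμ0R))
  have hμeval : fc.eval μ = 0 := (Polynomial.mem_roots'.mp (by rw [← hR]; exact hμR)).2
  -- uniform gap
  have hδμ : δ ≤ ‖μ‖ := by
    by_cases hc2 : ‖μ‖ ≤ 2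
    · have hall : ∀ w ∈ (f.map (Int.castRingHom ℂ)).roots, ‖w‖ ≤ 2 := by
        intro w hw
        rw [← hfc] at hw
        exact (hμmax w (Multiset.mem_toFinset.mpr hw)).trans hc2
      have haev : Polynomial.aeval μ f = 0 := by
        rw [Polynomial.aeval_def, ← Polynomial.eval_map, algebraMap_int_eq, ← hfc]
        exact hμeval
      have hfmon : f.Monic := Matrix.charpoly_monic _
      have hfdeg : f.natDegree = n := by
        rw [hf, Matrix.charpoly_natDegree_eq_dim, Fintype.card_fin]
      have := hgap f μ hfmon hfdeg haev hall hμ1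
      exact le_trans (min_le_left _ _) this
    · exact le_trans (min_le_right _ _) (le_of_not_ge hc2)
  have hμpos : 0 < ‖μ‖ := lt_trans one_pos hμ1
  have hμne : μ ≠ 0 := by
    intro h
    rw [h] at hμ1
    simp only [norm_zero] at hμ1
    linarith
  -- eigenvector for μ
  obtain ⟨w, hw0, hww⟩ := (root_iff_eigen A μ).mp hμeval
  set Gu : (Matrix (Fin n) (Fin n) ℂ)ˣ :=
    Units.map ((Int.castRingHom ℂ).mapMatrix :
      Matrix (Fin n) (Fin n) ℤ →+* Matrix (Fin n) (Fin n) ℂ).toMonoidHom g with hGu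
  have hGuval : ∀ k : ℤ, ((Gu ^ k : (Matrix (Fin n) (Fin n) ℂ)ˣ) : Matrix (Fin n) (Fin n) ℂ)
      = ((g ^ k : GL (Fin n) ℤ) : Matrix (Fin n) (Fin n) ℤ).map (Int.cast : ℤ → ℂ) := by
    intro k
    rw [hGu, ← map_zpow]
    rfl
  have hGw : (Gu : Matrix (Fin n) (Fin n) ℂ) *ᵥ w = μ • w := by
    have h1 : (Gu : Matrix (Fin n) (Fin n) ℂ) = A := rfl
    rw [h1]
    exact hww
  have hL : ε ≤ Real.log (‖μ‖) :=
    (Real.log_le_log (by linarith) hδμ : Real.log δ ≤ _)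
  -- key per-k bound
  have key : ∀ k : ℤ,
      (∀ i j, (|(((g ^ k : GL (Fin n) ℤ) : Matrix (Fin n) (Fin n) ℤ)) i j| : ℝ) ≤ T) →
      |(k : ℝ)| ≤ Mn * Real.log T / ε := by
    intro k hk
    have hb1 : ∀ i j,
        ‖((Gu ^ k : (Matrix (Fin n) (Fin n) ℂ)ˣ) :
          Matrix (Fin n) (Fin n) ℂ) i j‖ ≤ T := by
      intro i j
      rw [hGuval k, Matrix.map_apply, Complex.norm_intCast, ← Int.cast_abs]
      rw [Int.cast_abs]
      exact hk i j
    have h1 : ‖μ‖ ^ k ≤ n * T := by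
      have := eigen_abs_le hn hw0 (zpow_eigen Gu hμne hGw k) hb1
      rwa [norm_zpow] at this
    have hk2 : ∀ i j,
        (|(((g ^ (-k) : GL (Fin n) ℤ) : Matrix (Fin n) (Fin n) ℤ)) i j| : ℝ)
          ≤ (n.factorial : ℝ) * T ^ n := by
      intro i j
      have hinv : (g ^ (-k) : GL (Fin n) ℤ) = (g ^ k)⁻¹ := zpow_neg g k
      rw [hinv]
      exact inv_entry_bound (g ^ k) hT1 hk i j
    have hb2 : ∀ i j,
        ‖((Gu ^ (-k) : (Matrix (Fin n) (Fin n) ℂ)ˣ) :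
          Matrix (Fin n) (Fin n) ℂ) i j‖ ≤ (n.factorial : ℝ) * T ^ n := by
      intro i j
      rw [hGuval (-k), Matrix.map_apply, Complex.norm_intCast]
      exact hk2 i j
    have h2 : ‖μ‖ ^ (-k) ≤ n * ((n.factorial : ℝ) * T ^ n) := by
      have := eigen_abs_le hn hw0 (zpow_eigen Gu hμne hGw (-k)) hb2
      rwa [norm_zpow] at this
    set X : ℝ := (n : ℝ) * ((n.factorial : ℝ) * T ^ n) with hX
    have hTn : T ≤ T ^ n := le_self_pow₀ hT1 hn.ne'
    have hX1 : (n : ℝ) * T ≤ X := by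
      rw [hX]
      calc (n : ℝ) * T ≤ (n : ℝ) * T ^ n := by nlinarith
        _ ≤ (n : ℝ) * ((n.factorial : ℝ) * T ^ n) := by
            have h7 : T ^ n ≤ (n.factorial : ℝ) * T ^ n :=
              le_mul_of_one_le_left (by positivity) hfac1
            exact mul_le_mul_of_nonneg_left h7 (by positivity)
    have h1' : ‖μ‖ ^ k ≤ X := h1.trans hX1
    have hXpos : 0 < X := by positivity
    have hzp : ∀ m : ℤ, ‖μ‖ ^ m ≤ X →
        (m : ℝ) * Real.log (‖μ‖) ≤ Real.log X := by
      intro m hm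
      have := Real.log_le_log (zpow_pos hμpos m) hm
      rwa [Real.log_zpow] at this
    have hXlog : Real.log X ≤ Mn * Real.log T := by
      have hXeq : X = ((n : ℝ) * (n.factorial : ℝ)) * T ^ n := by rw [hX]; ring
      have hXlog1 : Real.log X
          = Real.log ((n : ℝ) * (n.factorial : ℝ)) + n * Real.log T := by
        rw [hXeq, Real.log_mul (by positivity) (by positivity), Real.log_pow]
      have h3 : Real.log ((n : ℝ) * (n.factorial : ℝ))
          ≤ (Real.log ((n : ℝ) * (n.factorial : ℝ)) / Real.log 2) * Real.log T := by
        have := div_nonneg hlognn hlog2.le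
        calc Real.log ((n : ℝ) * (n.factorial : ℝ))
            = (Real.log ((n : ℝ) * (n.factorial : ℝ)) / Real.log 2) * Real.log 2 := by
              field_simp
          _ ≤ _ := by nlinarith
      rw [hXlog1, hMndef]
      have hnlogT : (n : ℝ) * Real.log T ≤ (n : ℝ) * Real.log T := le_refl _
      nlinarith
    have hkL : |(k : ℝ)| * Real.log (‖μ‖) ≤ Real.log X := by
      rcases le_or_gt 0 (k : ℝ) with hk0 | hk0
      · rw [abs_of_nonneg hk0]
        exact hzp k h1'
      · rw [abs_of_neg hk0]
        have := hzp (-k) h2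
        rwa [Int.cast_neg] at this
    have hkε : |(k : ℝ)| * ε ≤ Mn * Real.log T := by
      have h4 : |(k : ℝ)| * ε ≤ |(k : ℝ)| * Real.log (‖μ‖) :=
        mul_le_mul_of_nonneg_left hL (abs_nonneg _)
      linarith [hkL.trans hXlog]
    rw [le_div_iff₀ hεpos]
    exact hkε
  -- conclusion
  set S := {k : ℤ | ∀ i j,
      (|(((g ^ k : GL (Fin n) ℤ) : Matrix (Fin n) (Fin n) ℤ)) i j| : ℝ) ≤ T} with hS
  set K : ℝ := Mn * Real.log T / ε with hKdef
  have hK0 : 0 ≤ K := div_nonneg (mul_nonneg hMn0.le hlogT0) hεpos.le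
  set m : ℤ := ⌈K⌉ with hm
  have hm0 : 0 ≤ m := Int.ceil_nonneg hK0
  have hsub : S ⊆ ((Finset.Icc (-m) m : Finset ℤ) : Set ℤ) := by
    intro k hk
    have h1 := key k hk
    have h2 : |(k : ℝ)| ≤ (m : ℝ) := h1.trans (Int.le_ceil K)
    have h3 : |k| ≤ m := by
      rw [← @Int.cast_le ℝ, Int.cast_abs]
      exact h2
    rw [Finset.mem_coe, Finset.mem_Icc]
    rcases abs_le.mp h3 with ⟨ha, hb⟩
    exact ⟨ha, hb⟩
  have hfin : S.Finite := Set.Finite.subset (Finset.Icc (-m) m).finite_toSet hsub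
  refine ⟨hfin, ?_⟩
  have hcard : S.ncard ≤ (Finset.Icc (-m) m).card := by
    have := Set.ncard_le_ncard hsub (Finset.Icc (-m) m).finite_toSet
    rwa [Set.ncard_coe_finset] at this
  have hm1 : (m : ℝ) ≤ K + 1 := le_of_lt (Int.ceil_lt_add_one K)
  have hcardval : (((Finset.Icc (-m) m).card : ℕ) : ℝ) ≤ 2 * K + 3 := by
    have hcc : (((Finset.Icc (-m) m).card : ℕ) : ℤ) = 2 * m + 1 := by
      rw [Int.card_Icc]; omega
    have hcc' : (((Finset.Icc (-m) m).card : ℕ) : ℝ) = 2 * (m : ℝ) + 1 := by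
      exact_mod_cast congrArg (Int.cast : ℤ → ℝ) hcc
    rw [hcc']
    linarith
  have hfinal : (S.ncard : ℝ) ≤ 2 * K + 3 := by
    calc (S.ncard : ℝ) ≤ (((Finset.Icc (-m) m).card : ℕ) : ℝ) := by exact_mod_cast hcard
      _ ≤ 2 * K + 3 := hcardval
  rw [Real.rpow_one]
  have h5 : 3 ≤ (3 / Real.log 2) * Real.log T := by
    rw [div_mul_eq_mul_div, le_div_iff₀ hlog2]
    nlinarith
  have h6 : 2 * K = (2 * Mn / ε) * Real.log T := by
    rw [hKdef]; field_simp
  calc (S.ncard : ℝ) ≤ 2 * K + 3 := hfinal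
    _ ≤ (2 * Mn / ε) * Real.log T + (3 / Real.log 2) * Real.log T := by
        rw [← h6]; linarith
    _ = (2 * Mn / ε + 3 / Real.log 2) * Real.log T := by ring
end
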